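/- arXiv:1411.7666 — 7 statements merged into one kernel-verified Lean document; each statement's English description precedes it below -/
import Mathlib

section
/- Let S be a nontrivial subspace of an n-dimensional complex inner product space H with orthonormal basis (w_1,…,w_n), and let d = dim(S^⊥). Then there exists k ≤ d+1 such that ⟨w_k, P_S w_k⟩ ≥ 1/(d+1). -/
/-- If `S` is a nonzero subspace of an `n`-dimensional complex inner product space with
orthonormal basis `w`, and `d = dim S^⊥`, then some `k` among the first `d+1` indices
satisfies `⟨w k, P_S (w k)⟩ ≥ 1/(d+1)`. -/
theorem exists_basis_vector_large_projection {n : ℕ}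
    (S : Submodule ℂ (EuclideanSpace ℂ (Fin n))) (hS : S ≠ ⊥)
    (w : OrthonormalBasis (Fin n) ℂ (EuclideanSpace ℂ (Fin n)))
    (d : ℕ) (hd : d = Module.finrank ℂ Sᗮ) :
    ∃ k : Fin n, (k : ℕ) < d + 1 ∧
      (1 : ℝ) / (d + 1) ≤
        (inner ℂ (w k) ((Submodule.orthogonalProjectionOnto S (w k) : EuclideanSpace ℂ (Fin n))) : ℂ).re := by
  classical
  -- Parseval for the basis w
  have parseval : ∀ x : EuclideanSpace ℂ (Fin n),
      ∑ k, ‖(inner ℂ (w k) x : ℂ)‖ ^ 2 = ‖x‖ ^ 2 := by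
    intro x
    have h := w.sum_inner_mul_inner x x
    have h2 : ∀ k, (inner ℂ x (w k) : ℂ) * inner ℂ (w k) x
        = ((‖(inner ℂ (w k) x : ℂ)‖ : ℂ)) ^ 2 := by
      intro k
      rw [← inner_conj_symm, RCLike.conj_mul]
      norm_num
    rw [Finset.sum_congr rfl fun k _ => h2 k, inner_self_eq_norm_sq_to_K] at h
    exact Complex.ofReal_injective (by push_cast; exact h)
  -- orthonormal basis of Sᗮ
  let v : OrthonormalBasis (Fin d) ℂ Sᗮ :=
    (stdOrthonormalBasis ℂ Sᗮ).reindex (finCongr hd.symm)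
  have hproj : ∀ x : EuclideanSpace ℂ (Fin n),
      ‖(Submodule.orthogonalProjectionOnto Sᗮ x : EuclideanSpace ℂ (Fin n))‖ ^ 2
        = ∑ j, ‖(inner ℂ ((v j : EuclideanSpace ℂ (Fin n))) x : ℂ)‖ ^ 2 := by
    intro x
    have h1 : ‖(Submodule.orthogonalProjectionOnto Sᗮ x : EuclideanSpace ℂ (Fin n))‖
        = ‖v.repr (Submodule.orthogonalProjectionOnto Sᗮ x)‖ := by
      rw [v.repr.norm_map]; exact Submodule.norm_coe _
    rw [h1, PiLp.norm_sq_eq_of_L2]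
    congr 1; ext j
    rw [v.repr_apply_apply, Submodule.inner_orthogonalProjectionOnto_eq_of_mem_left]
  -- total mass of the complementary projection
  have hsum : ∑ k, ‖(Submodule.orthogonalProjectionOnto Sᗮ (w k) : EuclideanSpace ℂ (Fin n))‖ ^ 2
      = (d : ℝ) := by
    calc ∑ k, ‖(Submodule.orthogonalProjectionOnto Sᗮ (w k) : EuclideanSpace ℂ (Fin n))‖ ^ 2
        = ∑ k, ∑ j, ‖(inner ℂ ((v j : EuclideanSpace ℂ (Fin n))) (w k) : ℂ)‖ ^ 2 :=
          Finset.sum_congr rfl fun k _ => hproj (w k)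
      _ = ∑ j, ∑ k, ‖(inner ℂ (w k) ((v j : EuclideanSpace ℂ (Fin n))) : ℂ)‖ ^ 2 := by
          rw [Finset.sum_comm]
          exact Finset.sum_congr rfl fun j _ => Finset.sum_congr rfl fun k _ => by
            rw [norm_inner_symm]
      _ = ∑ j : Fin d, (1 : ℝ) := Finset.sum_congr rfl fun j _ => by
          rw [parseval, Submodule.norm_coe, v.orthonormal.1 j, one_pow]
      _ = (d : ℝ) := by simp
  -- re ⟪x, P_S x⟫ = ‖P_S x‖²
  have hre : ∀ x : EuclideanSpace ℂ (Fin n),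
      (inner ℂ x ((Submodule.orthogonalProjectionOnto S x : EuclideanSpace ℂ (Fin n))) : ℂ).re
        = ‖(Submodule.orthogonalProjectionOnto S x : EuclideanSpace ℂ (Fin n))‖ ^ 2 := by
    intro x
    have hx : (inner ℂ x ((Submodule.orthogonalProjectionOnto S x : EuclideanSpace ℂ (Fin n))) : ℂ)
        = inner ℂ ((Submodule.orthogonalProjectionOnto S x : EuclideanSpace ℂ (Fin n))
            + (Submodule.orthogonalProjectionOnto Sᗮ x : EuclideanSpace ℂ (Fin n)))
            ((Submodule.orthogonalProjectionOnto S x : EuclideanSpace ℂ (Fin n))) := by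
      exact congrArg (fun y => (inner ℂ y ((Submodule.orthogonalProjectionOnto S x : EuclideanSpace ℂ (Fin n))) : ℂ))
        (S.starProjection_add_starProjection_orthogonal x).symm
    rw [hx, inner_add_left,
      Submodule.inner_left_of_mem_orthogonal (Submodule.orthogonalProjectionOnto S x).2
        (Submodule.orthogonalProjectionOnto Sᗮ x).2, add_zero]
    simpa using inner_self_eq_norm_sq (𝕜 := ℂ) ((Submodule.orthogonalProjectionOnto S x : EuclideanSpace ℂ (Fin n)))
  -- d + 1 ≤ n
  have hdn : d + 1 ≤ n := by
    have h1 : 0 < Module.finrank ℂ S :=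
      Module.finrank_pos_iff.mpr (Submodule.nontrivial_iff_ne_bot.mpr hS)
    have h2 := S.finrank_add_finrank_orthogonal
    rw [finrank_euclideanSpace_fin] at h2
    omega
  -- index set
  set T : Finset (Fin n) := Finset.univ.filter (fun k : Fin n => (k : ℕ) < d + 1) with hT
  have hTcard : T.card = d + 1 := by
    have : T = Finset.map (Fin.castLEEmb hdn) Finset.univ := by
      ext k
      simp only [hT, Finset.mem_filter, Finset.mem_univ, true_and, Finset.mem_map]
      constructor
      · intro hk
        refine ⟨⟨(k : ℕ), hk⟩, ?_⟩
        rfl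
      · rintro ⟨j, -, rfl⟩
        simp
        omega
    rw [this, Finset.card_map, Finset.card_univ, Fintype.card_fin]
  have hTne : T.Nonempty := Finset.card_pos.mp (by omega)
  -- sum of projections over T is at least 1
  have hsumT : (1 : ℝ) ≤ ∑ k ∈ T,
      (inner ℂ (w k) ((Submodule.orthogonalProjectionOnto S (w k) : EuclideanSpace ℂ (Fin n))) : ℂ).re := by
    have heach : ∀ k : Fin n,
        (inner ℂ (w k) ((Submodule.orthogonalProjectionOnto S (w k) : EuclideanSpace ℂ (Fin n))) : ℂ).re
          = 1 - ‖(Submodule.orthogonalProjectionOnto Sᗮ (w k) : EuclideanSpace ℂ (Fin n))‖ ^ 2 := by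
      intro k
      rw [hre]
      have := Submodule.norm_sq_eq_add_norm_sq_projection (w k) S
      rw [w.orthonormal.1 k] at this
      have hc : ‖Submodule.orthogonalProjectionOnto S (w k)‖
          = ‖(Submodule.orthogonalProjectionOnto S (w k) : EuclideanSpace ℂ (Fin n))‖ :=
        (Submodule.norm_coe _).symm
      have hc' : ‖Submodule.orthogonalProjectionOnto Sᗮ (w k)‖
          = ‖(Submodule.orthogonalProjectionOnto Sᗮ (w k) : EuclideanSpace ℂ (Fin n))‖ :=
        (Submodule.norm_coe _).symm
      rw [hc, hc', one_pow] at this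
      linarith
    rw [Finset.sum_congr rfl fun k _ => heach k, Finset.sum_sub_distrib,
      Finset.sum_const, hTcard]
    simp only [nsmul_eq_mul, mul_one]
    have hle : ∑ k ∈ T, ‖(Submodule.orthogonalProjectionOnto Sᗮ (w k) : EuclideanSpace ℂ (Fin n))‖ ^ 2
        ≤ (d : ℝ) := by
      rw [← hsum]
      exact Finset.sum_le_sum_of_subset_of_nonneg (Finset.subset_univ T)
        (fun k _ _ => sq_nonneg _)
    push_cast
    linarith
  -- extract the index
  have hconst : ∑ _k ∈ T, (1 : ℝ) / (d + 1) = 1 := by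
    rw [Finset.sum_const, hTcard, nsmul_eq_mul]
    field_simp
    norm_num
  have key : ∑ _k ∈ T, (1 : ℝ) / (d + 1)
      ≤ ∑ k ∈ T,
        (inner ℂ (w k) ((Submodule.orthogonalProjectionOnto S (w k) : EuclideanSpace ℂ (Fin n))) : ℂ).re := by
    rw [hconst]; exact hsumT
  obtain ⟨k, hkT, hk⟩ := Finset.exists_le_of_sum_le hTne key
  refine ⟨k, ?_, hk⟩
  simp only [hT, Finset.mem_filter] at hkT
  exact hkT.2
end

section
/- The sum ∑_{k=1}^{d+1} ⟨w_k, P_S w_k⟩ is at least dim(S ∩ span(w_1,…,w_{d+1})), which in turn is at least dim(S) + (d+1) − n ≥ 1, where S is a nonzero subspace of an n-dimensional inner product space, d = dim(S^⊥), and (w_k) is an orthonormal basis. -/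
set_option maxHeartbeats 1000000

lemma re_inner_orthProj {E : Type*} [NormedAddCommGroup E] [InnerProductSpace ℂ E]
    (K : Submodule ℂ E) [K.HasOrthogonalProjection] (x : E) :
    (inner ℂ x ((K.orthogonalProjectionOnto x : E)) : ℂ).re
      = ‖(K.orthogonalProjectionOnto x : E)‖ ^ 2 := by
  have h : (inner ℂ x ((K.orthogonalProjectionOnto x : E)) : ℂ)
      = inner ℂ ((K.orthogonalProjectionOnto x : E)) ((K.orthogonalProjectionOnto x : E)) := by
    have h0 := Submodule.starProjection_inner_eq_zero (K := K) x
      (K.orthogonalProjectionOnto x) (Submodule.coe_mem _)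
    have : (inner ℂ (x - (K.orthogonalProjectionOnto x : E))
        ((K.orthogonalProjectionOnto x : E)) : ℂ) = 0 := h0
    rw [inner_sub_left, sub_eq_zero] at this
    exact this
  rw [h, ← inner_self_eq_norm_sq (𝕜 := ℂ)]; rfl

/-- For a nonzero subspace `S` of an `n`-dimensional complex inner product space with
orthonormal basis `w` and `d = dim S^⊥`:
`∑_{k=1}^{d+1} ⟨w k, P_S (w k)⟩ ≥ dim (S ⊓ span(w_1,…,w_{d+1})) ≥ dim S + (d+1) − n ≥ 1`. -/
theorem sum_projection_ge_dim_inter {n : ℕ}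
    (S : Submodule ℂ (EuclideanSpace ℂ (Fin n))) (hS : S ≠ ⊥)
    (w : OrthonormalBasis (Fin n) ℂ (EuclideanSpace ℂ (Fin n)))
    (d : ℕ) (hd : d = Module.finrank ℂ Sᗮ) :
    (Module.finrank ℂ
        ↥(S ⊓ Submodule.span ℂ (w '' {k : Fin n | (k : ℕ) < d + 1})) : ℝ) ≤
      ∑ k ∈ Finset.univ.filter (fun k : Fin n => (k : ℕ) < d + 1),
        (inner ℂ (w k) ((S.orthogonalProjectionOnto (w k) : EuclideanSpace ℂ (Fin n))) : ℂ).re ∧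
    (Module.finrank ℂ S : ℤ) + (d + 1) - n ≤
      (Module.finrank ℂ
        ↥(S ⊓ Submodule.span ℂ (w '' {k : Fin n | (k : ℕ) < d + 1})) : ℤ) ∧
    (1 : ℤ) ≤ (Module.finrank ℂ S : ℤ) + (d + 1) - n := by
  have hn : Module.finrank ℂ (EuclideanSpace ℂ (Fin n)) = n := by
    simp [finrank_euclideanSpace]
  have hSd : Module.finrank ℂ S + d = n := by
    rw [hd, S.finrank_add_finrank_orthogonal, hn]
  have hSpos : 0 < Module.finrank ℂ S := by
    rcases Nat.eq_zero_or_pos (Module.finrank ℂ S) with h | h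
    · exact absurd (Submodule.finrank_eq_zero.mp h) hS
    · exact h
  have hdn : d + 1 ≤ n := by omega
  set A : Set (Fin n) := {k : Fin n | (k : ℕ) < d + 1} with hA
  set T : Submodule ℂ (EuclideanSpace ℂ (Fin n)) := Submodule.span ℂ (w '' A) with hT
  -- finrank T = d + 1
  have himg : w '' A = Set.range (fun i : Fin (d + 1) => w (Fin.castLE hdn i)) := by
    ext x
    constructor
    · rintro ⟨k, hk, rfl⟩
      exact ⟨⟨(k : ℕ), hk⟩, rfl⟩
    · rintro ⟨i, rfl⟩
      exact ⟨Fin.castLE hdn i, by simpa [hA] using i.isLt, rfl⟩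
  have hli : LinearIndependent ℂ (fun i : Fin (d + 1) => w (Fin.castLE hdn i)) :=
    (w.orthonormal.comp _ (Fin.castLE_injective hdn)).linearIndependent
  have hTrank : Module.finrank ℂ T = d + 1 := by
    rw [hT, himg, finrank_span_eq_card hli, Fintype.card_fin]
  -- parts 2 and 3
  have hsum := Submodule.finrank_sup_add_finrank_inf_eq S T
  have hle : Module.finrank ℂ ↥(S ⊔ T) ≤ n :=
    le_trans (Submodule.finrank_le _) (le_of_eq hn)
  have key : Module.finrank ℂ S + (d + 1) ≤ Module.finrank ℂ ↥(S ⊓ T) + n := by omega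
  refine ⟨?_, by push_cast; omega, by push_cast; omega⟩
  -- part 1
  set U : Submodule ℂ (EuclideanSpace ℂ (Fin n)) := S ⊓ T with hU
  have hUS : U ≤ S := inf_le_left
  have hUT : U ≤ T := inf_le_right
  set m := Module.finrank ℂ U with hm
  set u := stdOrthonormalBasis ℂ U with hu
  -- pointwise bound
  have hpt : ∀ k : Fin n,
      (inner ℂ (w k) ((U.orthogonalProjectionOnto (w k) : EuclideanSpace ℂ (Fin n))) : ℂ).re ≤
      (inner ℂ (w k) ((S.orthogonalProjectionOnto (w k) : EuclideanSpace ℂ (Fin n))) : ℂ).re := by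
    intro k
    rw [re_inner_orthProj, re_inner_orthProj]
    have h1 : (U.orthogonalProjectionOnto (w k) : EuclideanSpace ℂ (Fin n))
        = (U.orthogonalProjectionOnto (S.orthogonalProjectionOnto (w k)) : EuclideanSpace ℂ (Fin n)) := by
      exact congrArg Subtype.val (Submodule.orthogonalProjectionOnto_starProjection_of_le hUS (w k)).symm
    rw [h1]
    have h2 : ‖(U.orthogonalProjectionOnto ((S.orthogonalProjectionOnto (w k) : EuclideanSpace ℂ (Fin n))) :
        EuclideanSpace ℂ (Fin n))‖ ≤ ‖(S.orthogonalProjectionOnto (w k) : EuclideanSpace ℂ (Fin n))‖ := by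
      calc ‖(U.orthogonalProjectionOnto ((S.orthogonalProjectionOnto (w k) : EuclideanSpace ℂ (Fin n))) :
            EuclideanSpace ℂ (Fin n))‖
          = ‖U.orthogonalProjectionOnto ((S.orthogonalProjectionOnto (w k) : EuclideanSpace ℂ (Fin n)))‖ := rfl
        _ ≤ ‖U.orthogonalProjectionOnto‖ * ‖(S.orthogonalProjectionOnto (w k) : EuclideanSpace ℂ (Fin n))‖ :=
            (U.orthogonalProjectionOnto).le_opNorm _
        _ ≤ 1 * ‖(S.orthogonalProjectionOnto (w k) : EuclideanSpace ℂ (Fin n))‖ := by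
            gcongr; exact U.orthogonalProjectionOnto_norm_le
        _ = _ := one_mul _
    exact pow_le_pow_left₀ (norm_nonneg _) h2 2
  -- vanishing outside the filter
  have hzero : ∀ k : Fin n, ¬ ((k : ℕ) < d + 1) →
      U.orthogonalProjectionOnto (w k) = 0 := by
    intro k hk
    apply Submodule.orthogonalProjectionOnto_apply_of_mem_orthogonal
    apply Submodule.orthogonal_le hUT
    rw [Submodule.mem_orthogonal]
    intro y hy
    induction hy using Submodule.span_induction with
    | mem y hy =>
        rcases hy with ⟨j, hj, rfl⟩
        have : j ≠ k := by
          intro h; subst h; exact hk hj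
        simpa using w.orthonormal.2 this
    | zero => simp
    | add a b _ _ ha hb => rw [inner_add_left, ha, hb, add_zero]
    | smul c a _ ha => rw [inner_smul_left, ha, mul_zero]
  -- trace identity over the full basis
  have htrace : ∑ k : Fin n,
      (inner ℂ (w k) ((U.orthogonalProjectionOnto (w k) : EuclideanSpace ℂ (Fin n))) : ℂ) = (m : ℂ) := by
    have hrepr : ∀ k : Fin n, (U.orthogonalProjectionOnto (w k) : EuclideanSpace ℂ (Fin n))
        = ∑ i, (inner ℂ ((u i : EuclideanSpace ℂ (Fin n))) (w k) : ℂ) • (u i : EuclideanSpace ℂ (Fin n)) := by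
      intro k
      rw [u.orthogonalProjectionOnto_apply_eq_sum]
      push_cast
      rfl
    calc ∑ k : Fin n, (inner ℂ (w k) ((U.orthogonalProjectionOnto (w k) : EuclideanSpace ℂ (Fin n))) : ℂ)
        = ∑ k : Fin n, ∑ i, (inner ℂ ((u i : EuclideanSpace ℂ (Fin n))) (w k) : ℂ)
            * (inner ℂ (w k) ((u i : EuclideanSpace ℂ (Fin n))) : ℂ) := by
          refine Finset.sum_congr rfl fun k _ => ?_
          rw [hrepr k, inner_sum]
          refine Finset.sum_congr rfl fun i _ => ?_
          rw [inner_smul_right]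
      _ = ∑ i, ∑ k : Fin n, (inner ℂ ((u i : EuclideanSpace ℂ (Fin n))) (w k) : ℂ)
            * (inner ℂ (w k) ((u i : EuclideanSpace ℂ (Fin n))) : ℂ) := Finset.sum_comm
      _ = ∑ i : Fin m, (inner ℂ ((u i : EuclideanSpace ℂ (Fin n))) ((u i : EuclideanSpace ℂ (Fin n))) : ℂ) := by
          refine Finset.sum_congr rfl fun i _ => ?_
          exact w.sum_inner_mul_inner _ _
      _ = ∑ i : Fin m, (1 : ℂ) := by
          refine Finset.sum_congr rfl fun i _ => ?_
          have h1 := u.orthonormal.1 i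
          rw [inner_self_eq_norm_sq_to_K]
          rw [show ‖(u i : EuclideanSpace ℂ (Fin n))‖ = 1 from h1]
          norm_num
      _ = (m : ℂ) := by simp
  -- conclude
  have hsum2 : (m : ℝ) = ∑ k ∈ Finset.univ.filter (fun k : Fin n => (k : ℕ) < d + 1),
      (inner ℂ (w k) ((U.orthogonalProjectionOnto (w k) : EuclideanSpace ℂ (Fin n))) : ℂ).re := by
    have h1 : ∑ k : Fin n,
        (inner ℂ (w k) ((U.orthogonalProjectionOnto (w k) : EuclideanSpace ℂ (Fin n))) : ℂ).re = (m : ℝ) := by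
      rw [← Complex.re_sum, htrace]; simp
    rw [← h1]
    symm
    apply Finset.sum_subset (Finset.filter_subset _ _)
    intro k _ hk
    rw [Finset.mem_filter] at hk
    push_neg at hk
    have := hzero k (by simpa using hk)
    rw [this]
    simp
  rw [hsum2]
  exact Finset.sum_le_sum fun k _ => hpt k
end

section
/- Define slog : ℕ × ℕ → ℕ recursively by slog(0, q) = 0 and slog(p, q) = slog(p − ⌈p/q⌉, q) + 1 for p ≥ 1 and q ≥ 1. Then slog is nondecreasing in its first argument: if p ≤ p', then slog(p, q) ≤ slog(p', q). -/
/-- The step logarithm: `slog q 0 = 0` and `slog q p = slog q (p − ⌈p/q⌉) + 1` for `p ≥ 1`.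
(For `q ≥ 1` and `p ≥ 1` we have `⌈p/q⌉ = (p + q - 1)/q ≥ 1`, so `max 1` is redundant
there and only serves to make the recursion terminate for all inputs.) -/
def slog (q : ℕ) : ℕ → ℕ
  | 0 => 0
  | p + 1 => slog q (p + 1 - max 1 ((p + 1 + q - 1) / q)) + 1
decreasing_by
  exact Nat.sub_lt (Nat.succ_pos p) (lt_of_lt_of_le Nat.zero_lt_one (le_max_left _ _))

lemma slog_le_succ (q : ℕ) (hq : 1 ≤ q) : ∀ p, slog q p ≤ slog q (p + 1) := by
  intro p
  induction p using Nat.strong_induction_on with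
  | _ p ih =>
    match p with
    | 0 => simp [slog]
    | p + 1 =>
      rw [show p + 1 + 1 = p + 2 from rfl, slog, slog]
      set d1 := (p + 1 + q - 1) / q with hd1
      set d2 := (p + 2 + q - 1) / q with hd2
      have h1 : d1 ≤ d2 := Nat.div_le_div_right (by omega)
      have h2 : d2 ≤ d1 + 1 := by
        have := Nat.div_le_div_right (c := q) (show p + 2 + q - 1 ≤ (p + 1 + q - 1) + q by omega)
        rwa [Nat.add_div_right _ (by omega)] at this
      set a := p + 1 - max 1 d1 with ha
      set b := p + 2 - max 1 d2 with hb
      have hcase : b = a ∨ b = a + 1 := by omega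
      rcases hcase with hc | hc
      · rw [hc]
      · rw [hc]
        have hlt : a < p + 1 := by omega
        exact Nat.add_le_add_right (ih a hlt) 1

/-- `slog` is nondecreasing in its first (paper) argument. -/
theorem slog_mono (q : ℕ) (hq : 1 ≤ q) (p p' : ℕ) (h : p ≤ p') :
    slog q p ≤ slog q p' := by
  induction h with
  | refl => exact le_refl _
  | step _ ih => exact le_trans ih (slog_le_succ q hq _)
end

section
/- With slog(p,q) defined by slog(0,q)=0 and slog(p,q)=slog(p−⌈p/q⌉,q)+1, and s_q defined by s_q(0)=0, s_q(p)=s_q(p−1)+⌈(s_q(p−1)+1)/(q−1)⌉ for q ≥ 2: for every k ≥ 1, slog(k, q) = slog(s_q(p), q) = p, where p is the least natural number with k ≤ s_q(p). -/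
def sfun (q : ℕ) : ℕ → ℕ
  | 0 => 0
  | p + 1 => sfun q p + (sfun q p + q - 1) / (q - 1)

lemma sfun_d_ge_one (q : ℕ) (hq : 2 ≤ q) (s : ℕ) : 1 ≤ (s + q - 1) / (q - 1) := by
  rw [Nat.le_div_iff_mul_le (by omega)]
  omega

lemma sfun_lt_succ (q : ℕ) (hq : 2 ≤ q) (p : ℕ) : sfun q p < sfun q (p + 1) := by
  have h := sfun_d_ge_one q hq (sfun q p)
  show sfun q p < sfun q p + (sfun q p + q - 1) / (q - 1)
  omega

/-- The `f` map is monotone. -/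
lemma fmap_mono (q : ℕ) (hq : 2 ≤ q) : Monotone (fun k => k - (k + q - 1) / q) := by
  apply monotone_nat_of_le_succ
  intro k
  show k - (k + q - 1) / q ≤ k + 1 - (k + 1 + q - 1) / q
  have h1 : (k + 1 + q - 1) / q = k / q + 1 := by
    have h' : k + 1 + q - 1 = k + q := by omega
    rw [h', Nat.add_div_right _ (by omega)]
  rw [h1]
  have h2 : k / q ≤ (k + q - 1) / q := Nat.div_le_div_right (by omega)
  set a := k / q
  set b := (k + q - 1) / q
  omega

lemma fmap_le (q : ℕ) (hq : 2 ≤ q) {a b : ℕ} (h : a ≤ b) :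
    a - (a + q - 1) / q ≤ b - (b + q - 1) / q := fmap_mono q hq h

lemma key_div (q : ℕ) (hq : 2 ≤ q) (p : ℕ) :
    (sfun q (p + 1) + q - 1) / q = (sfun q p + q - 1) / (q - 1) ∧
    (sfun q (p + 1) + 1 + q - 1) / q = (sfun q p + q - 1) / (q - 1) := by
  set s := sfun q p with hs
  set d := (s + q - 1) / (q - 1) with hd
  have hd1 : 1 ≤ d := sfun_d_ge_one q hq s
  have hdm := Nat.div_add_mod (s + q - 1) (q - 1)
  have hmlt : (s + q - 1) % (q - 1) < q - 1 := Nat.mod_lt _ (by omega)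
  set m := (s + q - 1) % (q - 1) with hm
  rw [← hd] at hdm
  have hsucc : sfun q (p + 1) = s + d := by
    show sfun q p + (sfun q p + q - 1) / (q - 1) = s + d
    rw [← hs, ← hd]
  have hmul : q * d = (q - 1) * d + d := by
    have hq' : q = (q - 1) + 1 := by omega
    conv_lhs => rw [hq']
    ring
  set A := (q - 1) * d with hA
  set B := q * d with hB
  have e1 : s + d + q - 1 = B + m := by omega
  have e2 : s + d + 1 + q - 1 = B + (m + 1) := by omega
  constructor
  · rw [hsucc, e1, hB, Nat.mul_add_div (by omega), Nat.div_eq_of_lt (by omega)]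
    omega
  · rw [hsucc, e2, hB, Nat.mul_add_div (by omega), Nat.div_eq_of_lt (by omega)]
    omega


lemma key1 (q : ℕ) (hq : 2 ≤ q) (p : ℕ) :
    sfun q (p + 1) - (sfun q (p + 1) + q - 1) / q = sfun q p := by
  obtain ⟨h1, _⟩ := key_div q hq p
  rw [h1]
  show sfun q p + (sfun q p + q - 1) / (q - 1) - (sfun q p + q - 1) / (q - 1) = sfun q p
  omega

lemma key2 (q : ℕ) (hq : 2 ≤ q) (p : ℕ) :
    sfun q (p + 1) + 1 - (sfun q (p + 1) + 1 + q - 1) / q = sfun q p + 1 := by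
  obtain ⟨_, h2⟩ := key_div q hq p
  rw [h2]
  show sfun q p + (sfun q p + q - 1) / (q - 1) + 1 - (sfun q p + q - 1) / (q - 1)
      = sfun q p + 1
  omega

lemma slog_step (q : ℕ) (hq : 2 ≤ q) (k : ℕ) (hk : 1 ≤ k) :
    slog q k = slog q (k - (k + q - 1) / q) + 1 := by
  obtain ⟨k', rfl⟩ : ∃ k', k = k' + 1 := ⟨k - 1, by omega⟩
  rw [slog]
  congr 2
  have h1 : 1 ≤ (k' + 1 + q - 1) / q := by
    rw [Nat.le_div_iff_mul_le (by omega)]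
    omega
  have : max 1 ((k' + 1 + q - 1) / q) = (k' + 1 + q - 1) / q := by omega
  rw [this]

lemma slog_interval (q : ℕ) (hq : 2 ≤ q) :
    ∀ k p, sfun q p < k → k ≤ sfun q (p + 1) → slog q k = p + 1 := by
  intro k
  induction k using Nat.strong_induction_on with
  | _ k ih =>
    intro p h1 h2
    have hk1 : 1 ≤ k := by omega
    have hg : 1 ≤ (k + q - 1) / q := by
      rw [Nat.le_div_iff_mul_le (by omega)]
      omega
    have hflt : k - (k + q - 1) / q < k := by
      set g := (k + q - 1) / q
      omega
    have hub : k - (k + q - 1) / q ≤ sfun q p := by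
      have h := fmap_le q hq h2
      rw [key1 q hq p] at h
      exact h
    rw [slog_step q hq k hk1]
    cases p with
    | zero =>
      have h0 : sfun q 0 = 0 := rfl
      have h00 : k - (k + q - 1) / q = 0 := by omega
      rw [h00]
      simp [slog]
    | succ p' =>
      have hlb : sfun q p' + 1 ≤ k - (k + q - 1) / q := by
        have h := fmap_le q hq (show sfun q (p' + 1) + 1 ≤ k by omega)
        rw [key2 q hq p'] at h
        exact h
      rw [ih _ hflt p' (by omega) hub]

/-- For `q ≥ 2` and `k ≥ 1`, if `p` is the least natural number with `k ≤ s_q(p)`,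
then `slog q k = slog q (s_q(p)) = p`. -/
theorem slog_eq_least_sfun (q k p : ℕ) (hq : 2 ≤ q) (hk : 1 ≤ k)
    (hp : k ≤ sfun q p) (hmin : ∀ p' < p, sfun q p' < k) :
    slog q k = slog q (sfun q p) ∧ slog q (sfun q p) = p := by
  cases p with
  | zero =>
    have h0 : sfun q 0 = 0 := rfl
    omega
  | succ p' =>
    have h1 : sfun q p' < k := hmin p' (Nat.lt_succ_self p')
    have hk' : slog q k = p' + 1 := slog_interval q hq k p' h1 hp
    have hs' : slog q (sfun q (p' + 1)) = p' + 1 :=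
      slog_interval q hq (sfun q (p' + 1)) p' (sfun_lt_succ q hq p') le_rfl
    exact ⟨by rw [hk', hs'], hs'⟩
end

section
/- Every code of the quantum graph Q_{n,m} has dimension at most ⌈n/(m+1)⌉. -/
open Matrix

lemma star_dot_eq_sum_normSq {n : ℕ} (x : Fin n → ℂ) :
    star x ⬝ᵥ x = ((∑ k, Complex.normSq (x k) : ℝ) : ℂ) := by
  simp only [dotProduct, Pi.star_apply, Complex.ofReal_sum]
  refine Finset.sum_congr rfl fun k _ => ?_
  rw [Complex.star_def, mul_comm, Complex.mul_conj]

lemma vecMul_star_eq {n : ℕ} (W : Matrix (Fin n) (Fin n) ℂ) (c : Fin n → ℂ) :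
    Matrix.vecMul (star c) W = star (Wᴴ *ᵥ c) := by
  rw [Matrix.star_mulVec, Matrix.conjTranspose_conjTranspose]

lemma star_dot_mulVec_unitary {n : ℕ} (W : Matrix (Fin n) (Fin n) ℂ) (c z : Fin n → ℂ) :
    star c ⬝ᵥ (W *ᵥ z) = star (Wᴴ *ᵥ c) ⬝ᵥ z := by
  rw [Matrix.dotProduct_mulVec, vecMul_star_eq]

lemma unitary_preserves_sum {n : ℕ} (W : Matrix (Fin n) (Fin n) ℂ) (hW : Wᴴ * W = 1)
    (c : Fin n → ℂ) :
    ∑ k, Complex.normSq ((Wᴴ *ᵥ c) k) = ∑ k, Complex.normSq (c k) := by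
  have h1 : star (Wᴴ *ᵥ c) ⬝ᵥ (Wᴴ *ᵥ c) = star c ⬝ᵥ c := by
    rw [Matrix.star_mulVec, Matrix.conjTranspose_conjTranspose, Matrix.dotProduct_mulVec,
      Matrix.vecMul_vecMul, mul_eq_one_comm.mp hW, Matrix.vecMul_one]
  rw [star_dot_eq_sum_normSq, star_dot_eq_sum_normSq] at h1
  exact_mod_cast h1

lemma star_dot_diag {n : ℕ} (lam : Fin n → ℝ) (y : Fin n → ℂ) :
    star y ⬝ᵥ ((Matrix.diagonal (fun k => (lam k : ℂ))) *ᵥ y)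
      = ((∑ k, lam k * Complex.normSq (y k) : ℝ) : ℂ) := by
  simp only [dotProduct, Matrix.mulVec_diagonal, Pi.star_apply, Complex.ofReal_sum]
  refine Finset.sum_congr rfl fun k _ => ?_
  rw [Complex.ofReal_mul]
  calc star (y k) * ((lam k : ℂ) * y k) = (lam k : ℂ) * (y k * star (y k)) := by ring
  _ = (lam k : ℂ) * (Complex.normSq (y k) : ℂ) := by rw [Complex.star_def, Complex.mul_conj]

lemma key_identity {n : ℕ} (A W P : Matrix (Fin n) (Fin n) ℂ) (lam : Fin n → ℝ) (ε : ℝ)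
    (hW : Wᴴ * W = 1) (hA : A = W * Matrix.diagonal (fun k => (lam k : ℂ)) * Wᴴ)
    (hPh : Pᴴ = P) (hPA : P * A * P = (ε : ℂ) • P)
    (c : Fin n → ℂ) (hc : P *ᵥ c = c) :
    ε * (∑ k, Complex.normSq ((Wᴴ *ᵥ c) k)) = ∑ k, lam k * Complex.normSq ((Wᴴ *ᵥ c) k) := by
  have hPdot : ∀ z, star c ⬝ᵥ (P *ᵥ z) = star c ⬝ᵥ z := by
    intro z
    rw [Matrix.dotProduct_mulVec, vecMul_star_eq, hPh, hc]
  have e2 : star c ⬝ᵥ (A *ᵥ c) = ((∑ k, lam k * Complex.normSq ((Wᴴ *ᵥ c) k) : ℝ) : ℂ) := by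
    rw [hA, ← Matrix.mulVec_mulVec, ← Matrix.mulVec_mulVec, star_dot_mulVec_unitary]
    exact star_dot_diag lam (Wᴴ *ᵥ c)
  have e1 : star c ⬝ᵥ (A *ᵥ c) = (ε : ℂ) * (star c ⬝ᵥ c) := by
    calc star c ⬝ᵥ (A *ᵥ c) = star c ⬝ᵥ (P *ᵥ (A *ᵥ c)) := (hPdot _).symm
    _ = star c ⬝ᵥ ((P * A * P) *ᵥ c) := by
        rw [show (P * A * P) *ᵥ c = P *ᵥ (A *ᵥ c) from by
          rw [← Matrix.mulVec_mulVec, ← Matrix.mulVec_mulVec, hc]]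
    _ = (ε : ℂ) * (star c ⬝ᵥ c) := by
        rw [hPA, Matrix.smul_mulVec, dotProduct_smul, hc, smul_eq_mul]
  have e3 : star c ⬝ᵥ c = ((∑ k, Complex.normSq ((Wᴴ *ᵥ c) k) : ℝ) : ℂ) := by
    rw [star_dot_eq_sum_normSq, unitary_preserves_sum W hW c]
  rw [e2, e3] at e1
  exact_mod_cast e1.symm

theorem trace_eq_rank_of_proj {n : ℕ} (P : Matrix (Fin n) (Fin n) ℂ) (hP : P.IsHermitian)
    (hPP : P * P = P) : P.trace = (P.rank : ℂ) := by
  classical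
  set U : Matrix (Fin n) (Fin n) ℂ := (hP.eigenvectorUnitary : Matrix (Fin n) (Fin n) ℂ) with hU
  have hUU : star U * U = 1 := Unitary.coe_star_mul_self hP.eigenvectorUnitary
  have hUU' : U * star U = 1 := Unitary.coe_mul_star_self hP.eigenvectorUnitary
  have hdiag : star U * P * U = diagonal (RCLike.ofReal ∘ hP.eigenvalues) :=
    by have := hP.conjStarAlgAut_star_eigenvectorUnitary
       rwa [Unitary.conjStarAlgAut_star_apply] at this
  have hsq : ∀ i, hP.eigenvalues i = 0 ∨ hP.eigenvalues i = 1 := by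
    intro i
    have h2 : (diagonal (RCLike.ofReal ∘ hP.eigenvalues) : Matrix (Fin n) (Fin n) ℂ) *
        (diagonal (RCLike.ofReal ∘ hP.eigenvalues)) = diagonal (RCLike.ofReal ∘ hP.eigenvalues) := by
      rw [← hdiag]
      calc (star U * P * U) * (star U * P * U) = star U * (P * (U * star U) * P) * U := by
            simp only [mul_assoc]
      _ = star U * (P * P) * U := by rw [hUU']; simp only [mul_one, mul_assoc]
      _ = star U * P * U := by rw [hPP, mul_assoc]
    rw [diagonal_mul_diagonal] at h2
    have h3 := congrFun (Matrix.diagonal_injective h2) i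
    simp only [Pi.mul_apply, Function.comp_apply] at h3
    have h4 : (hP.eigenvalues i) * (hP.eigenvalues i) = hP.eigenvalues i := by
      exact_mod_cast h3
    rcases eq_or_ne (hP.eigenvalues i) 0 with h0 | h0
    · exact Or.inl h0
    · right; field_simp at h4; exact h4
  have htr : P.trace = ∑ i, (hP.eigenvalues i : ℂ) := by
    have : P.trace = (star U * P * U).trace := by
      rw [Matrix.trace_mul_cycle, hUU', one_mul]
    rw [this, hdiag, Matrix.trace_diagonal]
    rfl
  have hrk : P.rank = (Finset.univ.filter (fun i => hP.eigenvalues i ≠ 0)).card := by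
    rw [hP.rank_eq_card_non_zero_eigs, Fintype.card_subtype]
  rw [htr, hrk]
  rw [← Finset.sum_filter_add_sum_filter_not Finset.univ (fun i => hP.eigenvalues i ≠ 0)]
  have h1 : ∀ i ∈ Finset.univ.filter (fun i => hP.eigenvalues i ≠ 0),
      (hP.eigenvalues i : ℂ) = 1 := by
    intro i hi
    rcases hsq i with h | h
    · simp only [Finset.mem_filter, Finset.mem_univ, true_and] at hi; exact absurd h hi
    · simp [h]
  have h0 : ∀ i ∈ Finset.univ.filter (fun i => ¬ hP.eigenvalues i ≠ 0),
      (hP.eigenvalues i : ℂ) = 0 := by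
    intro i hi
    simp only [Finset.mem_filter, not_not] at hi
    simp [hi.2]
  rw [Finset.sum_congr rfl h1, Finset.sum_congr rfl h0]
  simp


/-- The tropical, cyclical, commutative quantum graph `Q_{n,m}`: its edge space is spanned
by the identity together with `m` commuting positive self-adjoint operators `A i` with a
common orthonormal eigenbasis; for each `i`, `w i` lists the eigenvectors of `A i` in
decreasing order of eigenvalue `lam i`, the eigenvalues are tropically separated
(`0 < λ_{i,j+1} < λ_{i,j}/n²`), consecutive labelings are cyclic shifts by
`⌊n/m⌋ (+1 for the first n mod m indices)`, and `ws` is the single-index relabeling in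
which `w_{(k−1)m+1},…,w_{km}` each equal `w_{i,k}` for some `i`. -/
structure Qnm (n m : ℕ) where
  A : Fin m → Matrix (Fin n) (Fin n) ℂ
  herm : ∀ i, (A i).IsHermitian
  comm : ∀ i j, A i * A j = A j * A i
  lam : Fin m → Fin n → ℝ
  w : Fin m → Fin n → (Fin n → ℂ)
  ws : Fin n → (Fin n → ℂ)
  ortho : ∀ i j k, star (w i j) ⬝ᵥ w i k = if j = k then 1 else 0
  span : ∀ i, Submodule.span ℂ (Set.range (w i)) = ⊤
  eig : ∀ i j, (A i).mulVec (w i j) = (lam i j : ℂ) • w i j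
  pos : ∀ i j, 0 < lam i j
  tropical : ∀ i (j : Fin n) (h : (j : ℕ) + 1 < n),
    lam i ⟨(j : ℕ) + 1, h⟩ < lam i j / (n : ℝ) ^ 2
  cyclical : ∀ (i : Fin m) (hi : (i : ℕ) + 1 < m) (j : Fin n),
    w ⟨(i : ℕ) + 1, hi⟩ j =
      w i ⟨((j : ℕ) + n / m + if (i : ℕ) + 1 ≤ n % m then 1 else 0) % n,
        Nat.mod_lt _ (Nat.lt_of_le_of_lt (Nat.zero_le _) j.isLt)⟩
  relabel : ∀ t : Fin n, ∃ i : Fin m,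
    ws t = w i ⟨(t : ℕ) / m, Nat.lt_of_le_of_lt (Nat.div_le_self _ _) t.isLt⟩
  wsortho : ∀ s t, star (ws s) ⬝ᵥ ws t = if s = t then 1 else 0
  wsspan : Submodule.span ℂ (Set.range ws) = ⊤

/-- A code of `Q_{n,m}`: an (orthogonal projection onto a) subspace `C` with
`P_C A P_C = ε_C(A) P_C` for every edge operator `A` (equivalently, for the identity
and each basis operator `A i`). -/
def Qnm.IsCode {n m : ℕ} (Q : Qnm n m) (P : Matrix (Fin n) (Fin n) ℂ) : Prop :=
  P.IsHermitian ∧ P * P = P ∧ ∀ i, ∃ ε : ℝ, P * Q.A i * P = (ε : ℂ) • P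

/-- Every code of `Q_{n,m}` has dimension at most `⌈n/(m+1)⌉ = (n + m)/(m + 1)`. -/
theorem code_dim_le_ceiling {n m : ℕ} (hn : 1 ≤ n) (hm : 1 ≤ m) (Q : Qnm n m)
    (P : Matrix (Fin n) (Fin n) ℂ) (hP : Q.IsCode P) :
    P.rank ≤ (n + m) / (m + 1) := by
  classical
  by_contra hcon
  push_neg at hcon
  obtain ⟨hPh', hPP, hPA⟩ := hP
  have hPh : Pᴴ = P := hPh'
  set d := P.rank with hd
  have hd1 : 1 ≤ (n + m) / (m + 1) := (Nat.one_le_div_iff (by omega)).mpr (by omega)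
  have hd2 : 2 ≤ d := by omega
  have hdn : d ≤ n := by simpa using P.rank_le_card_width
  have hn2 : 2 ≤ n := le_trans hd2 hdn
  -- eigenbases as unitary matrices
  set W : Fin m → Matrix (Fin n) (Fin n) ℂ := fun i => Matrix.of fun r k => Q.w i k r with hWdef
  have hW : ∀ i, (W i)ᴴ * W i = 1 := by
    intro i; ext j k
    have := Q.ortho i j k
    simpa [Matrix.mul_apply, Matrix.conjTranspose_apply, Matrix.one_apply, dotProduct,
      hWdef] using this
  have hAW : ∀ i, Q.A i = W i * Matrix.diagonal (fun k => (Q.lam i k : ℂ)) * (W i)ᴴ := by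
    intro i
    have h1 : Q.A i * W i = W i * Matrix.diagonal (fun k => (Q.lam i k : ℂ)) := by
      ext r k
      have h2 := congrFun (Q.eig i k) r
      simp only [Matrix.mulVec, dotProduct, Pi.smul_apply, smul_eq_mul] at h2
      rw [Matrix.mul_apply, Matrix.mul_diagonal]
      simp only [hWdef, Matrix.of_apply]
      rw [h2]; ring
    calc Q.A i = Q.A i * (W i * (W i)ᴴ) := by
          rw [mul_eq_one_comm.mp (hW i), mul_one]
    _ = (Q.A i * W i) * (W i)ᴴ := by rw [mul_assoc]
    _ = W i * Matrix.diagonal (fun k => (Q.lam i k : ℂ)) * (W i)ᴴ := by rw [h1]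
  choose ε hε using hPA
  have hkey : ∀ (i : Fin m) (c : Fin n → ℂ), P *ᵥ c = c →
      ε i * (∑ k, Complex.normSq (((W i)ᴴ *ᵥ c) k))
        = ∑ k, Q.lam i k * Complex.normSq (((W i)ᴴ *ᵥ c) k) :=
    fun i c hc => key_identity (Q.A i) (W i) P (Q.lam i) (ε i) (hW i) (hAW i) hPh (hε i) c hc
  -- monotonicity of eigenvalues
  have hn2R : (1:ℝ) ≤ (n:ℝ)^2 := by
    have h1 : (1:ℝ) ≤ (n:ℝ) := by exact_mod_cast hn
    nlinarith
  have hstep : ∀ (i : Fin m) (j : ℕ) (h : j + 1 < n),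
      Q.lam i ⟨j+1, h⟩ ≤ Q.lam i ⟨j, by omega⟩ := by
    intro i j h
    have ht := Q.tropical i ⟨j, by omega⟩ h
    have hp := Q.pos i (⟨j, by omega⟩ : Fin n)
    calc Q.lam i ⟨j+1,h⟩ ≤ Q.lam i ⟨j, by omega⟩ / (n:ℝ)^2 := le_of_lt ht
    _ ≤ Q.lam i ⟨j, by omega⟩ := div_le_self (le_of_lt hp) hn2R
  have hanti : ∀ (i : Fin m) (a b : ℕ) (ha : a < n) (hb : b < n), a ≤ b →
      Q.lam i ⟨b, hb⟩ ≤ Q.lam i ⟨a, ha⟩ := by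
    intro i a b
    induction b with
    | zero => intro ha hb hab
              have : a = 0 := by omega
              subst this; exact le_refl _
    | succ b ih =>
        intro ha hb hab
        rcases Nat.lt_or_ge a (b+1) with h | h
        · have hab' : a ≤ b := by omega
          exact le_trans (hstep i b hb) (ih ha (by omega) hab')
        · have : a = b + 1 := by omega
          subst this; exact le_refl _
  have htrop2 : ∀ (i : Fin m) (a b : Fin n), (a:ℕ) < (b:ℕ) →
      Q.lam i b < Q.lam i a / (n:ℝ)^2 := by
    intro i a b hab
    have h1 : (a:ℕ) + 1 < n := by omega
    have h2 : Q.lam i b ≤ Q.lam i ⟨(a:ℕ)+1, h1⟩ := by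
      have := hanti i ((a:ℕ)+1) (b:ℕ) h1 b.isLt (by omega)
      simpa using this
    have h3 := Q.tropical i a h1
    calc Q.lam i b ≤ Q.lam i ⟨(a:ℕ)+1, h1⟩ := h2
    _ < Q.lam i a / (n:ℝ)^2 := by
        have : Q.lam i ⟨(a:ℕ)+1, h1⟩ < Q.lam i ⟨(a:ℕ), a.isLt⟩ / (n:ℝ)^2 := h3
        simpa using this
  -- existence of a deep level K i for each operator
  have hd1n : d - 1 ≤ n := by omega
  have hKex : ∀ i : Fin m, ∃ K : Fin n, (d - 1 ≤ (K : ℕ)) ∧ ε i ≤ Q.lam i K := by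
    intro i
    have hdim : Module.finrank ℂ ↥(LinearMap.range P.mulVecLin) = d := rfl
    set M : Matrix (Fin (d-1)) (Fin n) ℂ :=
      Matrix.of (fun j r => star (Q.w i (Fin.castLE hd1n j) r)) with hM
    set φ : ↥(LinearMap.range P.mulVecLin) →ₗ[ℂ] (Fin (d-1) → ℂ) :=
      M.mulVecLin ∘ₗ (LinearMap.range P.mulVecLin).subtype with hφ
    have hker : 1 ≤ Module.finrank ℂ ↥(LinearMap.ker φ) := by
      have h1 := LinearMap.finrank_range_add_finrank_ker φ
      rw [hdim] at h1
      have h2 : Module.finrank ℂ ↥(LinearMap.range φ) ≤ d - 1 := by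
        refine le_trans (Submodule.finrank_le _) ?_
        simp [Module.finrank_fintype_fun_eq_card]
      omega
    have hker' : LinearMap.ker φ ≠ ⊥ := by
      intro h
      rw [h, finrank_bot] at hker
      omega
    obtain ⟨x, hxker, hxne⟩ := Submodule.exists_mem_ne_zero_of_ne_bot hker'
    set c : Fin n → ℂ := (x : Fin n → ℂ) with hc
    have hcne : c ≠ 0 := by
      intro h
      exact hxne (Subtype.ext h)
    have hcfix : P *ᵥ c = c := by
      obtain ⟨v, hv⟩ := x.2
      have hv' : P *ᵥ v = c := hv
      rw [← hv', Matrix.mulVec_mulVec, hPP]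
    set y : Fin n → ℂ := (W i)ᴴ *ᵥ c with hy
    have hyne : y ≠ 0 := by
      intro h
      apply hcne
      have : (W i) *ᵥ y = c := by
        rw [hy, Matrix.mulVec_mulVec, mul_eq_one_comm.mp (hW i), Matrix.one_mulVec]
      rw [← this, h, Matrix.mulVec_zero]
    obtain ⟨k₀, hk₀⟩ := Function.ne_iff.mp hyne
    have hFne : (Finset.univ.filter (fun k => y k ≠ 0)).Nonempty :=
      ⟨k₀, Finset.mem_filter.mpr ⟨Finset.mem_univ _, hk₀⟩⟩
    set K : Fin n := (Finset.univ.filter (fun k => y k ≠ 0)).min' hFne with hK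
    have hyK : y K ≠ 0 := by
      have := Finset.min'_mem _ hFne
      rw [← hK] at this
      exact (Finset.mem_filter.mp this).2
    have hKmin : ∀ k : Fin n, y k ≠ 0 → K ≤ k := by
      intro k hk
      rw [hK]
      exact Finset.min'_le (Finset.univ.filter (fun k : Fin n => y k ≠ 0)) k
        (Finset.mem_filter.mpr ⟨Finset.mem_univ _, hk⟩)
    have hylow : ∀ k : Fin n, (k:ℕ) < d - 1 → y k = 0 := by
      intro k hk
      have h1 : φ x = 0 := hxker
      have h2 := congrFun h1 (⟨(k:ℕ), hk⟩ : Fin (d-1))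
      have h3 : (M *ᵥ c) ⟨(k:ℕ), hk⟩ = 0 := h2
      rw [hy]
      have h4 : ((W i)ᴴ *ᵥ c) k = (M *ᵥ c) ⟨(k:ℕ), hk⟩ := by
        simp only [Matrix.mulVec, dotProduct, hM, Matrix.of_apply,
          Matrix.conjTranspose_apply, hWdef]
        refine Finset.sum_congr rfl fun r _ => ?_
        congr 2
      rw [h4, h3]
    have hK1 : d - 1 ≤ (K : ℕ) := by
      by_contra h
      push_neg at h
      exact hyK (hylow K h)
    refine ⟨K, hK1, ?_⟩
    have hkey' := hkey i c hcfix
    have hSpos : 0 < ∑ k, Complex.normSq (y k) := by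
      refine Finset.sum_pos' (fun k _ => Complex.normSq_nonneg _) ⟨k₀, Finset.mem_univ _, ?_⟩
      exact Complex.normSq_pos.mpr hk₀
    have hsum_le : ∑ k, Q.lam i k * Complex.normSq (y k)
        ≤ ∑ k, Q.lam i K * Complex.normSq (y k) := by
      refine Finset.sum_le_sum fun k _ => ?_
      rcases eq_or_ne (y k) 0 with h | h
      · simp [h]
      · have hKk := hKmin k h
        have : Q.lam i k ≤ Q.lam i K := by
          have := hanti i (K:ℕ) (k:ℕ) K.isLt k.isLt hKk
          simpa using this
        exact mul_le_mul_of_nonneg_right this (Complex.normSq_nonneg _)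
    have h5 : ε i * (∑ k, Complex.normSq (y k)) ≤ Q.lam i K * (∑ k, Complex.normSq (y k)) := by
      rw [hkey']
      calc ∑ k, Q.lam i k * Complex.normSq (y k)
          ≤ ∑ k, Q.lam i K * Complex.normSq (y k) := hsum_le
      _ = Q.lam i K * (∑ k, Complex.normSq (y k)) := by rw [Finset.mul_sum]
    exact le_of_mul_le_mul_right h5 hSpos
  choose K hK1 hK2 using hKex
  -- relabeling
  choose op hop using Q.relabel
  set Ws : Matrix (Fin n) (Fin n) ℂ := Matrix.of (fun r t => Q.ws t r) with hWsdef
  have hWs : Wsᴴ * Ws = 1 := by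
    ext s t
    have := Q.wsortho s t
    simpa [Matrix.mul_apply, Matrix.conjTranspose_apply, Matrix.one_apply, dotProduct,
      hWsdef] using this
  set Sf : Fin n → ℝ := fun t => ∑ r, Complex.normSq ((P *ᵥ Q.ws t) r) with hSf
  have hPc : ∀ x : Fin n → ℂ, P *ᵥ (P *ᵥ x) = P *ᵥ x := by
    intro x
    rw [Matrix.mulVec_mulVec, hPP]
  have hdot : ∀ t, star (Q.ws t) ⬝ᵥ (P *ᵥ Q.ws t) = ((Sf t : ℝ) : ℂ) := by
    intro t
    have h1 : star (Q.ws t) ⬝ᵥ (P *ᵥ Q.ws t) = star (P *ᵥ Q.ws t) ⬝ᵥ (P *ᵥ Q.ws t) := by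
      conv_lhs => rw [← hPc (Q.ws t)]
      rw [Matrix.dotProduct_mulVec, vecMul_star_eq, hPh]
    rw [h1, star_dot_eq_sum_normSq]
  have hS0 : ∀ t, 0 ≤ Sf t := by
    intro t
    exact Finset.sum_nonneg fun r _ => Complex.normSq_nonneg _
  have htrace : (d : ℝ) = ∑ t, Sf t := by
    have h0 : P.trace = (d : ℂ) := by
      rw [hd]; exact trace_eq_rank_of_proj P hPh' hPP
    have h2 : P.trace = (Wsᴴ * (P * Ws)).trace := by
      rw [Matrix.trace_mul_comm (Wsᴴ) (P * Ws), mul_assoc, mul_eq_one_comm.mp hWs,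
        mul_one]
    have h3 : (Wsᴴ * (P * Ws)).trace = ∑ t, star (Q.ws t) ⬝ᵥ (P *ᵥ Q.ws t) := by
      rw [Matrix.trace]
      refine Finset.sum_congr rfl fun t _ => ?_
      simp only [Matrix.diag_apply, Matrix.mul_apply, Matrix.conjTranspose_apply, hWsdef,
        Matrix.of_apply, dotProduct, Matrix.mulVec, Pi.star_apply]
    have h4 : P.trace = ((∑ t, Sf t : ℝ) : ℂ) := by
      rw [h2, h3]
      rw [Finset.sum_congr rfl (fun t _ => hdot t)]
      push_cast
      rfl
    rw [h0] at h4
    exact_mod_cast h4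
  have hS1 : ∀ t, Sf t ≤ 1 := by
    intro t
    have hu := unitary_preserves_sum Ws hWs (P *ᵥ Q.ws t)
    have hcoord : (Wsᴴ *ᵥ (P *ᵥ Q.ws t)) t = star (Q.ws t) ⬝ᵥ (P *ᵥ Q.ws t) := by
      simp only [Matrix.mulVec, dotProduct, Matrix.conjTranspose_apply, hWsdef,
        Matrix.of_apply, Pi.star_apply]
    have hterm : Complex.normSq ((Wsᴴ *ᵥ (P *ᵥ Q.ws t)) t)
        ≤ ∑ k, Complex.normSq ((Wsᴴ *ᵥ (P *ᵥ Q.ws t)) k) :=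
      Finset.single_le_sum (fun k _ => Complex.normSq_nonneg _) (Finset.mem_univ t)
    rw [hcoord, hdot t, hu] at hterm
    have h5 : Complex.normSq ((Sf t : ℝ) : ℂ) = (Sf t)^2 := by
      rw [Complex.normSq_ofReal]; ring
    rw [h5] at hterm
    nlinarith [hS0 t]
  have hsmall : ∀ t : Fin n, ((t:ℕ)/m < (K (op t) : ℕ)) → Sf t * (n:ℝ)^2 ≤ 1 := by
    intro t hlt
    set c : Fin n → ℂ := P *ᵥ Q.ws t with hcdef
    have hc : P *ᵥ c = c := hPc _
    have hk := hkey (op t) c hc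
    set lv : Fin n := ⟨(t:ℕ)/m, Nat.lt_of_le_of_lt (Nat.div_le_self _ _) t.isLt⟩ with hlv
    have hcoord : (((W (op t))ᴴ) *ᵥ c) lv = star (Q.ws t) ⬝ᵥ c := by
      rw [hop t]
      simp only [Matrix.mulVec, dotProduct, Matrix.conjTranspose_apply, hWdef,
        Matrix.of_apply, Pi.star_apply]
      rfl
    have hsum : ∑ k, Complex.normSq (((W (op t))ᴴ *ᵥ c) k) = Sf t :=
      unitary_preserves_sum (W (op t)) (hW (op t)) c
    have hterm : Q.lam (op t) lv * Complex.normSq ((((W (op t))ᴴ) *ᵥ c) lv)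
        ≤ ∑ k, Q.lam (op t) k * Complex.normSq ((((W (op t))ᴴ) *ᵥ c) k) :=
      Finset.single_le_sum
        (fun k _ => mul_nonneg (le_of_lt (Q.pos (op t) k)) (Complex.normSq_nonneg _))
        (Finset.mem_univ lv)
    rw [← hk, hsum] at hterm
    have h5 : Complex.normSq ((((W (op t))ᴴ) *ᵥ c) lv) = (Sf t)^2 := by
      rw [hcoord, hdot t, Complex.normSq_ofReal]; ring
    rw [h5] at hterm
    have h6 : ε (op t) ≤ Q.lam (op t) (K (op t)) := hK2 (op t)
    have h7 : Q.lam (op t) (K (op t)) < Q.lam (op t) lv / (n:ℝ)^2 :=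
      htrop2 (op t) lv (K (op t)) hlt
    have hlampos := Q.pos (op t) lv
    rcases eq_or_lt_of_le (hS0 t) with h | h
    · rw [← h]; norm_num
    · have h8 : Q.lam (op t) lv * (Sf t)^2 ≤ Q.lam (op t) lv * Sf t / (n:ℝ)^2 := by
        calc Q.lam (op t) lv * (Sf t)^2 ≤ ε (op t) * Sf t := hterm
        _ ≤ Q.lam (op t) (K (op t)) * Sf t := mul_le_mul_of_nonneg_right h6 (hS0 t)
        _ ≤ (Q.lam (op t) lv / (n:ℝ)^2) * Sf t :=
            mul_le_mul_of_nonneg_right (le_of_lt h7) (hS0 t)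
        _ = Q.lam (op t) lv * Sf t / (n:ℝ)^2 := by ring
      have hnpos : (0:ℝ) < (n:ℝ)^2 := by positivity
      have h9 : Q.lam (op t) lv * (Sf t)^2 * (n:ℝ)^2 ≤ Q.lam (op t) lv * Sf t :=
        (le_div_iff₀ hnpos).mp h8
      nlinarith [mul_pos hlampos h]
  -- counting
  set T' : Finset (Fin n) :=
    Finset.univ.filter (fun t : Fin n => (K (op t) : ℕ) ≤ (t:ℕ)/m) with hT'
  have hdT : d ≤ T'.card := by
    have hb1 : ∑ t ∈ T', Sf t ≤ (T'.card : ℝ) * 1 := by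
      have := Finset.sum_le_card_nsmul T' Sf 1 (fun t _ => hS1 t)
      simpa using this
    have hb2 : ∑ t ∈ Finset.univ.filter (fun t : Fin n => ¬ ((K (op t) : ℕ) ≤ (t:ℕ)/m)), Sf t
        ≤ (n : ℝ) * (1 / (n:ℝ)^2) := by
      have hcard : (Finset.univ.filter
          (fun t : Fin n => ¬ ((K (op t) : ℕ) ≤ (t:ℕ)/m))).card ≤ n := by
        refine le_trans (Finset.card_filter_le _ _) ?_
        simp
      have hle : ∀ t ∈ Finset.univ.filter (fun t : Fin n => ¬ ((K (op t) : ℕ) ≤ (t:ℕ)/m)),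
          Sf t ≤ 1 / (n:ℝ)^2 := by
        intro t ht
        have hlt : (t:ℕ)/m < (K (op t) : ℕ) := by
          have := (Finset.mem_filter.mp ht).2
          omega
        have := hsmall t hlt
        have hnpos : (0:ℝ) < (n:ℝ)^2 := by positivity
        rw [le_div_iff₀ hnpos]
        linarith
      calc ∑ t ∈ Finset.univ.filter (fun t : Fin n => ¬ ((K (op t) : ℕ) ≤ (t:ℕ)/m)), Sf t
          ≤ (Finset.univ.filter
              (fun t : Fin n => ¬ ((K (op t) : ℕ) ≤ (t:ℕ)/m))).card • (1 / (n:ℝ)^2) :=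
            Finset.sum_le_card_nsmul _ _ _ hle
      _ ≤ (n : ℝ) * (1 / (n:ℝ)^2) := by
          rw [nsmul_eq_mul]
          have h1 : (0:ℝ) ≤ 1 / (n:ℝ)^2 := by positivity
          exact mul_le_mul_of_nonneg_right (by exact_mod_cast hcard) h1
    have hsplit : (d : ℝ) ≤ (T'.card : ℝ) + (n : ℝ) * (1 / (n:ℝ)^2) := by
      rw [htrace, ← Finset.sum_filter_add_sum_filter_not Finset.univ
        (fun t : Fin n => (K (op t) : ℕ) ≤ (t:ℕ)/m) Sf]
      rw [hT']
      calc (∑ t ∈ Finset.univ.filter (fun t : Fin n => (K (op t) : ℕ) ≤ (t:ℕ)/m), Sf t)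
            + ∑ t ∈ Finset.univ.filter (fun t : Fin n => ¬ ((K (op t) : ℕ) ≤ (t:ℕ)/m)), Sf t
          ≤ ((Finset.univ.filter (fun t : Fin n => (K (op t) : ℕ) ≤ (t:ℕ)/m)).card : ℝ) * 1
            + (n : ℝ) * (1 / (n:ℝ)^2) := by
            refine add_le_add ?_ hb2
            simpa using hb1
      _ = ((Finset.univ.filter (fun t : Fin n => (K (op t) : ℕ) ≤ (t:ℕ)/m)).card : ℝ)
            + (n : ℝ) * (1 / (n:ℝ)^2) := by ring
    have hfrac : (n : ℝ) * (1 / (n:ℝ)^2) < 1 := by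
      have h1 : (2:ℝ) ≤ (n:ℝ) := by exact_mod_cast hn2
      rw [div_eq_mul_inv, one_mul, pow_two, mul_inv]
      calc (n:ℝ) * ((n:ℝ)⁻¹ * (n:ℝ)⁻¹) = ((n:ℝ) * (n:ℝ)⁻¹) * (n:ℝ)⁻¹ := by ring
      _ = (n:ℝ)⁻¹ := by rw [mul_inv_cancel₀ (by linarith), one_mul]
      _ < 1 := by
          rw [inv_lt_one_iff₀]
          right; linarith
    have hdR : (d : ℝ) < (T'.card : ℝ) + 1 := by linarith
    have hdN : d < T'.card + 1 := by exact_mod_cast hdR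
    omega
  have hT'ne : T'.Nonempty := Finset.card_pos.mp (by omega)
  obtain ⟨t₀, ht₀⟩ := hT'ne
  have hq : d - 1 ≤ n / m := by
    have h1 : (K (op t₀) : ℕ) ≤ (t₀:ℕ)/m := (Finset.mem_filter.mp ht₀).2
    have h2 : (t₀:ℕ)/m ≤ n/m := Nat.div_le_div_right (le_of_lt t₀.isLt)
    have h3 := hK1 (op t₀)
    omega
  -- ws is injective
  have hwsinj : ∀ s t : Fin n, Q.ws s = Q.ws t → s = t := by
    intro s t hst
    by_contra hne
    have h0 := Q.wsortho s t
    rw [if_neg hne, hst] at h0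
    have h1 := Q.wsortho t t
    rw [if_pos rfl] at h1
    exact one_ne_zero (h1.symm.trans h0)
  -- every full block contains every operator
  have hblock : ∀ (i : Fin m) (k : ℕ), k < n / m →
      ∃ t : Fin n, op t = i ∧ (t:ℕ)/m = k := by
    intro i k hk
    have hkm : ∀ r : Fin m, k * m + (r:ℕ) < n := by
      intro r
      have h1 : (k+1) * m ≤ (n/m) * m := Nat.mul_le_mul_right m hk
      have h2 : (n/m) * m ≤ n := Nat.div_mul_le_self n m
      have h3 := r.isLt
      calc k * m + (r:ℕ) < k * m + m := by omega
      _ = (k+1) * m := by ring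
      _ ≤ n := le_trans h1 h2
    have hlev : ∀ r : Fin m, ((k*m + (r:ℕ)) / m) = k := by
      intro r
      rw [mul_comm, Nat.mul_add_div (by omega), Nat.div_eq_of_lt r.isLt, add_zero]
    have he_inj : Function.Injective (fun r : Fin m => op ⟨k*m + (r:ℕ), hkm r⟩) := by
      intro r r' hrr
      simp only at hrr
      have h1 : Q.ws ⟨k*m + (r:ℕ), hkm r⟩ = Q.ws ⟨k*m + (r':ℕ), hkm r'⟩ := by
        rw [hop, hop, hrr]
        apply congrArg
        apply Fin.ext
        show (k*m + (r:ℕ))/m = (k*m + (r':ℕ))/m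
        rw [hlev r, hlev r']
      have h2 := hwsinj _ _ h1
      have h3 : k*m + (r:ℕ) = k*m + (r':ℕ) := by
        have := Fin.mk.injEq (k*m + (r:ℕ)) (hkm r) (k*m + (r':ℕ)) (hkm r') ▸ h2
        exact congrArg Fin.val h2
      exact Fin.ext (by omega)
    obtain ⟨r, hr⟩ := (Finite.injective_iff_surjective.mp he_inj) i
    exact ⟨⟨k*m + (r:ℕ), hkm r⟩, hr, hlev r⟩
  set F : Finset (Fin n) :=
    Finset.univ.filter (fun t : Fin n => (t:ℕ)/m < (K (op t) : ℕ)) with hF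
  have hcards : F.card + T'.card = n := by
    have h1 := Finset.card_filter_add_card_filter_not (s := Finset.univ)
      (p := fun t : Fin n => (t:ℕ)/m < (K (op t) : ℕ))
    rw [Finset.card_univ, Fintype.card_fin] at h1
    have h2 : Finset.univ.filter (fun t : Fin n => ¬ ((t:ℕ)/m < (K (op t) : ℕ))) = T' := by
      rw [hT']
      apply Finset.filter_congr
      intro t _
      simp [not_lt]
    rw [h2] at h1
    rw [hF]
    exact h1
  have hmF : m * (d-1) ≤ F.card := by
    have hge : ∀ p : Fin m × Fin (d-1), ∃ t : Fin n, op t = p.1 ∧ (t:ℕ)/m = (p.2:ℕ) :=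
      fun p => hblock p.1 p.2 (lt_of_lt_of_le p.2.isLt hq)
    choose g hg1 hg2 using hge
    have hinj : ∀ p ∈ (Finset.univ : Finset (Fin m × Fin (d-1))), g p ∈ F := by
      intro p _
      rw [hF, Finset.mem_filter]
      refine ⟨Finset.mem_univ _, ?_⟩
      rw [hg2 p, hg1 p]
      exact lt_of_lt_of_le p.2.isLt (hK1 p.1)
    have hcard := Finset.card_le_card_of_injOn g hinj (by
      intro p _ p' _ hpp
      have h1 : p.1 = p'.1 := by rw [← hg1 p, ← hg1 p', hpp]
      have h2 : (p.2:ℕ) = (p'.2:ℕ) := by rw [← hg2 p, ← hg2 p', hpp]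
      exact Prod.ext h1 (Fin.ext h2))
    simpa [Finset.card_univ] using hcard
  -- final arithmetic
  have harith : n + m < d * (m+1) := by
    have := (Nat.div_lt_iff_lt_mul (show 0 < m + 1 by omega)).mp hcon
    omega
  obtain ⟨e, he⟩ : ∃ e, d = e + 1 := ⟨d - 1, by omega⟩
  have h1 : m * e + (e + 1) ≤ n := by
    have h2 : m * (d - 1) + d ≤ F.card + T'.card := Nat.add_le_add hmF hdT
    rw [hcards] at h2
    have h3 : d - 1 = e := by omega
    rw [h3, he] at h2
    exact h2
  have h4 : n + m < (e+1) * (m+1) := by rw [← he]; exact harith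
  have h5 : (e+1) * (m+1) = m * e + e + m + 1 := by ring
  omega
end

section
/- If C is a code of Q_{n,m}, then dim(C) ≤ ⌈(dim(C^⊥)+1)/m⌉. -/
open Matrix

section Aux

/-- For a hermitian idempotent matrix, the trace equals the rank. -/
lemma aux_trace_eq_rank {N : ℕ} {R : Matrix (Fin N) (Fin N) ℂ}
    (hh : R.IsHermitian) (hi : R * R = R) : R.trace = (R.rank : ℂ) := by
  classical
  set V : Matrix (Fin N) (Fin N) ℂ := (hh.eigenvectorUnitary : Matrix (Fin N) (Fin N) ℂ)
    with hVdef
  have hspec := hh.spectral_theorem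
  have hV1 : star V * V = 1 := by
    simpa [hVdef] using (unitary.star_mul_self hh.eigenvectorUnitary)
  set D : Matrix (Fin N) (Fin N) ℂ := Matrix.diagonal (RCLike.ofReal ∘ hh.eigenvalues) with hD
  have hRD : R = V * D * star V := hspec
  have hDD : D * D = D := by
    have h1 : (V * D * star V) * (V * D * star V) = V * D * star V := by rw [← hRD]; exact hi
    have h2 : V * (D * D) * star V = V * D * star V := by
      calc V * (D * D) * star V = (V * D) * ((star V * V) * (D * star V)) := by
            rw [hV1]; noncomm_ring
        _ = (V * D * star V) * (V * D * star V) := by noncomm_ring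
        _ = V * D * star V := h1
    calc D * D = (star V * V) * (D * D) * (star V * V) := by rw [hV1]; noncomm_ring
      _ = star V * (V * (D * D) * star V) * V := by noncomm_ring
      _ = star V * (V * D * star V) * V := by rw [h2]
      _ = (star V * V) * D * (star V * V) := by noncomm_ring
      _ = D := by rw [hV1]; noncomm_ring
  have heig : ∀ j, hh.eigenvalues j = 0 ∨ hh.eigenvalues j = 1 := by
    intro j
    have := congrFun (congrFun hDD j) j
    simp [hD, Matrix.diagonal_mul_diagonal, Matrix.diagonal_apply_eq] at this
    have h : (hh.eigenvalues j) * (hh.eigenvalues j) = hh.eigenvalues j := by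
      exact_mod_cast this
    have h0 : hh.eigenvalues j * (hh.eigenvalues j - 1) = 0 := by ring_nf; linarith [h]
    rcases mul_eq_zero.mp h0 with h' | h'
    · exact Or.inl h'
    · exact Or.inr (by linarith)
  have htr : R.trace = ∑ j, (hh.eigenvalues j : ℂ) := by
    calc R.trace = (V * D * star V).trace := by rw [← hRD]
      _ = (star V * V * D).trace := by rw [Matrix.trace_mul_cycle]
      _ = D.trace := by rw [hV1, one_mul]
      _ = ∑ j, (hh.eigenvalues j : ℂ) := by rw [hD, Matrix.trace_diagonal]; rfl
  have hrank : R.rank = (Finset.univ.filter (fun j => hh.eigenvalues j ≠ 0)).card := by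
    rw [hh.rank_eq_card_non_zero_eigs, Fintype.card_subtype]
  rw [htr, hrank]
  have hvals : ∀ j, (hh.eigenvalues j : ℂ) = if hh.eigenvalues j ≠ 0 then 1 else 0 := by
    intro j
    rcases heig j with h | h <;> simp [h]
  rw [Finset.sum_congr rfl (fun j _ => hvals j), Finset.sum_boole]

/-- In the range of an idempotent matrix of rank `> card T` there is a nonzero vector
vanishing on `T`. -/
lemma aux_exists_vec {N : ℕ} {R : Matrix (Fin N) (Fin N) ℂ} (hi : R * R = R)
    (T : Finset (Fin N)) (hT : T.card < R.rank) :
    ∃ u : Fin N → ℂ, u ≠ 0 ∧ R.mulVec u = u ∧ ∀ t ∈ T, u t = 0 := by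
  classical
  set V := LinearMap.range R.mulVecLin with hV
  let φ : V →ₗ[ℂ] ({ x // x ∈ T } → ℂ) :=
    (LinearMap.funLeft ℂ ℂ (Subtype.val : {x // x ∈ T} → Fin N)).comp V.subtype
  have hker : LinearMap.ker φ ≠ ⊥ := by
    intro h
    have hinj : Function.Injective φ := LinearMap.ker_eq_bot.mp h
    have := LinearMap.finrank_le_finrank_of_injective hinj
    rw [Module.finrank_fintype_fun_eq_card, Fintype.card_coe] at this
    have : R.rank ≤ T.card := by
      simpa [Matrix.rank] using this
    omega
  obtain ⟨v, hv, hv0⟩ := Submodule.exists_mem_ne_zero_of_ne_bot hker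
  refine ⟨(v : Fin N → ℂ), ?_, ?_, ?_⟩
  · simpa using fun h => hv0 (by ext; simp [h])
  · obtain ⟨w, hw⟩ := v.2
    have h2 : R.mulVec (R.mulVec w) = R.mulVec w := by
      rw [Matrix.mulVec_mulVec, hi]
    have hw' : R.mulVec w = (v : Fin N → ℂ) := by simpa [Matrix.mulVecLin_apply] using hw
    rw [← hw']; exact h2
  · intro t ht
    have := congrFun hv ⟨t, ht⟩
    simpa [φ, LinearMap.funLeft] using this

/-- Partial sums of the cyclic shifts. -/
def qS (n m : ℕ) (i : ℕ) : ℕ := i * (n / m) + min i (n % m)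

lemma qS_zero (n m : ℕ) : qS n m 0 = 0 := by simp [qS]

lemma qS_succ (n m i : ℕ) :
    qS n m (i+1) = qS n m i + (n/m + if i+1 ≤ n%m then 1 else 0) := by
  have h : (i+1) * (n/m) = i * (n/m) + n/m := by ring
  unfold qS
  rw [h]
  split_ifs with hif <;> omega

lemma qS_top (n m : ℕ) (hm : 1 ≤ m) : qS n m m = n := by
  unfold qS
  have h1 : n % m < m := Nat.mod_lt _ hm
  have h2 : m * (n/m) + n % m = n := Nat.div_add_mod n m
  have h3 : m * (n/m) = (n/m) * m := Nat.mul_comm _ _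
  omega

lemma qS_gap {n m : ℕ} (hm : 1 ≤ m) {y : ℕ} (hy : y < n) :
    ∃ i, i < m ∧ qS n m i ≤ y ∧ y < qS n m (i+1) := by
  classical
  set F := (Finset.range (m+1)).filter (fun i => qS n m i ≤ y) with hF
  have h0 : (0 : ℕ) ∈ F := by
    simp [hF, qS_zero]
  have hne : F.Nonempty := ⟨0, h0⟩
  set i := F.max' hne with hi
  have hiF : i ∈ F := F.max'_mem hne
  have hile : i < m + 1 := by
    have := Finset.mem_filter.mp hiF
    simpa using (Finset.mem_range.mp this.1)
  have hSi : qS n m i ≤ y := (Finset.mem_filter.mp hiF).2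
  have him : i ≠ m := by
    intro h
    rw [h, qS_top n m hm] at hSi
    omega
  refine ⟨i, by omega, hSi, ?_⟩
  by_contra hcon
  push_neg at hcon
  have : i + 1 ∈ F := by
    simp only [hF, Finset.mem_filter, Finset.mem_range]
    exact ⟨by omega, hcon⟩
  have := F.le_max' _ this
  omega

lemma qS_sum_bound {n m r : ℕ} (hm : 1 ≤ m) (hr2 : 2 ≤ r)
    (hass : n + m < r * m + r) :
    ∑ i ∈ Finset.range m, (qS n m (i+1) - (qS n m i + (r-1))) ≤ r - 1 := by
  classical
  have hterm : ∀ i, qS n m (i+1) - (qS n m i + (r-1))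
      = (n/m + if i+1 ≤ n%m then 1 else 0) - (r-1) := by
    intro i; rw [qS_succ]; omega
  rw [Finset.sum_congr rfl (fun i _ => hterm i)]
  have hssum : ∑ i ∈ Finset.range m, (n/m + if i+1 ≤ n%m then (1:ℕ) else 0) = n := by
    rw [Finset.sum_add_distrib, Finset.sum_const, Finset.card_range, smul_eq_mul]
    have hcard : ∑ i ∈ Finset.range m, (if i+1 ≤ n%m then (1:ℕ) else 0)
        = ((Finset.range m).filter (fun i => i+1 ≤ n%m)).card := by
      rw [Finset.card_filter]
    have hfil : ((Finset.range m).filter (fun i => i+1 ≤ n%m)) = Finset.range (n%m) := by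
      ext i
      simp only [Finset.mem_filter, Finset.mem_range]
      have : n % m < m := Nat.mod_lt _ hm
      omega
    rw [hcard, hfil, Finset.card_range]
    have := Nat.div_add_mod n m
    have h3 : m * (n/m) = (n/m) * m := Nat.mul_comm _ _
    omega
  rcases le_or_gt (n/m + 1) (r-1) with hA | hB
  · have : ∀ i ∈ Finset.range m, (n/m + if i+1 ≤ n%m then (1:ℕ) else 0) - (r-1) = 0 := by
      intro i _
      split_ifs <;> omega
    rw [Finset.sum_congr rfl this, Finset.sum_const, smul_eq_mul, Nat.mul_zero]
    omega
  · have hge : ∀ i ∈ Finset.range m, (r-1) ≤ (n/m + if i+1 ≤ n%m then (1:ℕ) else 0) := by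
      intro i _
      split_ifs <;> omega
    rw [Finset.sum_tsub_distrib _ hge, hssum, Finset.sum_const, Finset.card_range, smul_eq_mul]
    obtain ⟨r', rfl⟩ : ∃ r', r = r' + 1 := ⟨r - 1, by omega⟩
    have hmm : m * r' + m = (r'+1) * m := by ring
    simp only [Nat.add_sub_cancel]
    omega

lemma mod_helper {n : ℕ} (hn : 0 < n) (x S : ℕ) (hx : x < n) :
    ((x + (n - S % n)) % n + S) % n = x := by
  rw [Nat.mod_add_mod]
  have h1 : S % n < n := Nat.mod_lt _ hn
  have h2 : n * (S / n) + S % n = S := Nat.div_add_mod S n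
  have h3 : x + (n - S % n) + S = x + n * (S / n + 1) := by
    have : n * (S / n + 1) = n * (S / n) + n := by ring
    omega
  rw [h3, Nat.add_mul_mod_self_left, Nat.mod_eq_of_lt hx]

lemma mod_helper2 {n : ℕ} (hn : 0 < n) (S c : ℕ) (hc : c < n) :
    ((S + c) + (n - S % n)) % n = c := by
  have h1 : S % n < n := Nat.mod_lt _ hn
  have h2 : n * (S / n) + S % n = S := Nat.div_add_mod S n
  have h3 : (S + c) + (n - S % n) = c + n * (S / n + 1) := by
    have : n * (S / n + 1) = n * (S / n) + n := by ring
    omega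
  rw [h3, Nat.add_mul_mod_self_left, Nat.mod_eq_of_lt hc]

/-- The eigenvector families `w i` are injective. -/
lemma Qnm.w_inj {n m : ℕ} (Q : Qnm n m) (i : Fin m) : Function.Injective (Q.w i) := by
  intro a b hab
  by_contra hne
  have h1 := Q.ortho i a b
  have h2 := Q.ortho i b b
  rw [if_neg hne, hab] at h1
  rw [if_pos rfl] at h2
  exact one_ne_zero (h2.symm.trans h1)

/-- The relabeled family `ws` is injective. -/
lemma Qnm.ws_inj {n m : ℕ} (Q : Qnm n m) : Function.Injective Q.ws := by
  intro a b hab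
  by_contra hne
  have h1 := Q.wsortho a b
  have h2 := Q.wsortho b b
  rw [if_neg hne, hab] at h1
  rw [if_pos rfl] at h2
  exact one_ne_zero (h2.symm.trans h1)

/-- Iterated form of `cyclical`: every `w i` is a cyclic shift of `w 0`. -/
lemma Qnm.w_shift {n m : ℕ} (hn : 0 < n) (Q : Qnm n m) :
    ∀ (i : ℕ) (hi : i < m) (j : Fin n),
      Q.w ⟨i, hi⟩ j = Q.w ⟨0, Nat.lt_of_le_of_lt (Nat.zero_le _) hi⟩
        ⟨((j : ℕ) + qS n m i) % n, Nat.mod_lt _ hn⟩ := by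
  intro i
  induction i with
  | zero =>
    intro hi j
    have h : (⟨((j : ℕ) + qS n m 0) % n, Nat.mod_lt _ hn⟩ : Fin n) = j := by
      apply Fin.ext
      simp [qS_zero, Nat.mod_eq_of_lt j.isLt]
    rw [h]
  | succ i ih =>
    intro hi j
    have hi' : i < m := by omega
    have hc := Q.cyclical ⟨i, hi'⟩ (by simpa using hi) j
    rw [hc, ih hi']
    apply congrArg
    apply Fin.ext
    show (((j : ℕ) + n / m + if i + 1 ≤ n % m then 1 else 0) % n + qS n m i) % n
      = ((j : ℕ) + qS n m (i+1)) % n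
    rw [Nat.mod_add_mod, qS_succ]
    generalize (if i + 1 ≤ n % m then 1 else 0 : ℕ) = c
    congr 1
    omega

/-- The eigenvalue lists are antitone. -/
lemma Qnm.lam_antitone {n m : ℕ} (hn : 1 ≤ n) (Q : Qnm n m) (i : Fin m) :
    ∀ (k a : ℕ) (hak : a + k < n),
      Q.lam i ⟨a + k, hak⟩ ≤ Q.lam i ⟨a, by omega⟩ := by
  intro k
  induction k with
  | zero =>
    intro a hak
    exact le_of_eq rfl
  | succ k ih =>
    intro a hak
    have h1 : a + k < n := by omega
    have ht : Q.lam i ⟨a + k + 1, hak⟩ < Q.lam i ⟨a + k, h1⟩ / (n:ℝ)^2 :=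
      Q.tropical i ⟨a + k, h1⟩ hak
    have hp := Q.pos i (⟨a + k, h1⟩ : Fin n)
    have hd : Q.lam i ⟨a+k,h1⟩ / (n:ℝ)^2 ≤ Q.lam i ⟨a+k,h1⟩ := by
      apply div_le_self (le_of_lt hp)
      have h2 : (1:ℝ) ≤ (n:ℝ) := by exact_mod_cast hn
      nlinarith
    have ih' := ih a h1
    show Q.lam i ⟨a + k + 1, hak⟩ ≤ Q.lam i ⟨a, by omega⟩
    linarith

end Aux

set_option maxHeartbeats 2000000 in
/-- If `C` is a code of `Q_{n,m}`, then
`dim C ≤ ⌈(dim C^⊥ + 1)/m⌉ = ((n - dim C) + 1 + m - 1)/m`. -/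
theorem code_dim_le_tropical {n m : ℕ} (hn : 1 ≤ n) (hm : 1 ≤ m) (Q : Qnm n m)
    (P : Matrix (Fin n) (Fin n) ℂ) (hP : Q.IsCode P) :
    P.rank ≤ (n - P.rank + 1 + m - 1) / m := by
  classical
  obtain ⟨hherm, hidem, hcode⟩ := hP
  choose ε hεdef using hcode
  set r := P.rank with hrdef
  have hrn : r ≤ n := by
    simpa using P.rank_le_card_width
  rw [Nat.le_div_iff_mul_le hm]
  have hsimp : n - r + 1 + m - 1 = n - r + m := by omega
  rw [hsimp]
  by_contra hass
  push_neg at hass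
  have hr2 : 2 ≤ r := by
    by_contra h
    push_neg at h
    interval_cases r <;> omega
  have hass' : n + m < r * m + r := by omega
  have hn2 : 2 ≤ n := le_trans hr2 hrn
  have hnpos : 0 < n := hn
  have hr1n : r - 1 < n := by omega
  -- the unitary change of basis
  set U : Matrix (Fin n) (Fin n) ℂ := Matrix.of (fun j t => Q.ws t j) with hU
  have hUU : Uᴴ * U = 1 := by
    ext s t
    have h := Q.wsortho s t
    simpa [Matrix.mul_apply, Matrix.conjTranspose_apply, hU, Matrix.one_apply,
      dotProduct] using h
  have hUU' : U * Uᴴ = 1 := mul_eq_one_comm.mp hUU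
  have hUcancel : ∀ X : Matrix (Fin n) (Fin n) ℂ, U * (Uᴴ * X) = X := by
    intro X; rw [← Matrix.mul_assoc, hUU', Matrix.one_mul]
  set R : Matrix (Fin n) (Fin n) ℂ := Uᴴ * P * U with hRdef
  have hRherm : R.IsHermitian := by
    show Rᴴ = R
    rw [hRdef]
    rw [Matrix.conjTranspose_mul, Matrix.conjTranspose_mul, Matrix.conjTranspose_conjTranspose,
      hherm.eq, Matrix.mul_assoc]
  have hRR : R * R = R := by
    rw [hRdef]
    calc Uᴴ * P * U * (Uᴴ * P * U) = Uᴴ * P * (U * (Uᴴ * (P * U))) := by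
          simp only [Matrix.mul_assoc]
      _ = Uᴴ * P * (P * U) := by rw [hUcancel]
      _ = Uᴴ * P * P * U := by simp only [Matrix.mul_assoc]
      _ = Uᴴ * P * U := by rw [Matrix.mul_assoc Uᴴ P P, hidem]
  have hRrank : R.rank = r := by
    rw [hRdef]
    rw [Matrix.rank_mul_eq_left_of_isUnit_det U (Uᴴ * P)
      (Matrix.isUnit_det_of_left_inverse hUU),
      Matrix.rank_mul_eq_right_of_isUnit_det Uᴴ P
      (Matrix.isUnit_det_of_right_inverse hUU)]
  have hRtr : R.trace = (r : ℂ) := by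
    rw [aux_trace_eq_rank hRherm hRR, hRrank]
  -- the permutations π i
  choose iof hiof using Q.relabel
  set X : Fin n → Fin n := fun t =>
    ⟨((t : ℕ)/m + qS n m (iof t)) % n, Nat.mod_lt _ hnpos⟩ with hXdef
  have hX : ∀ t, Q.ws t = Q.w ⟨0, hm⟩ (X t) := by
    intro t
    rw [hiof t]
    have h := Q.w_shift hnpos (iof t).val (iof t).isLt
      ⟨(t : ℕ) / m, Nat.lt_of_le_of_lt (Nat.div_le_self _ _) t.isLt⟩
    simpa using h
  set π : Fin m → Fin n → Fin n := fun i t =>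
    ⟨(((X t) : ℕ) + (n - qS n m i % n)) % n, Nat.mod_lt _ hnpos⟩ with hπdef
  have hπ : ∀ i t, Q.ws t = Q.w i (π i t) := by
    intro i t
    have h := Q.w_shift hnpos i.val i.isLt (π i t)
    simp only [Fin.eta] at h
    rw [h, hX t]
    exact congrArg _ (Fin.ext (mod_helper hnpos _ _ (X t).isLt).symm)
  have hπinj : ∀ i, Function.Injective (fun t => π i t) := by
    intro i a b hab
    apply Q.ws_inj
    rw [hπ i a, hπ i b]
    simp only at hab
    rw [hab]
  have hXinj : Function.Injective X := by
    intro a b hab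
    apply Q.ws_inj
    rw [hX a, hX b, hab]
  -- the diagonal entries of A i in the ws basis
  set d : Fin m → Fin n → ℝ := fun i t => Q.lam i (π i t) with hddef
  have heigws : ∀ i t, (Q.A i).mulVec (Q.ws t) = ((d i t : ℝ) : ℂ) • Q.ws t := by
    intro i t
    rw [hπ i t]
    exact Q.eig i (π i t)
  have hdiag : ∀ i, Uᴴ * Q.A i * U = Matrix.diagonal (fun t => ((d i t : ℝ) : ℂ)) := by
    intro i
    rw [Matrix.mul_assoc]
    ext s t
    have h1 : ∀ j, (Q.A i * U) j t = ((d i t : ℝ) : ℂ) * Q.ws t j := by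
      intro j
      have h := congrFun (heigws i t) j
      simp only [Matrix.mulVec, dotProduct, Pi.smul_apply, smul_eq_mul] at h
      rw [Matrix.mul_apply]
      simp only [hU, Matrix.of_apply]
      exact h
    have h2 : (Uᴴ * (Q.A i * U)) s t
        = ((d i t : ℝ) : ℂ) * (star (Q.ws s) ⬝ᵥ Q.ws t) := by
      rw [Matrix.mul_apply, dotProduct, Finset.mul_sum]
      apply Finset.sum_congr rfl
      intro j _
      rw [h1 j]
      simp only [Matrix.conjTranspose_apply, hU, Matrix.of_apply, Pi.star_apply,
        RCLike.star_def]
      ring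
    rw [h2, Q.wsortho s t]
    by_cases h : s = t
    · subst h; simp [Matrix.diagonal_apply_eq]
    · simp [Matrix.diagonal_apply_ne _ h, h]
  -- conjugated code equations
  have hRDR : ∀ i, R * Matrix.diagonal (fun t => ((d i t : ℝ) : ℂ)) * R = ((ε i : ℝ) : ℂ) • R := by
    intro i
    rw [← hdiag i, hRdef]
    calc Uᴴ * P * U * (Uᴴ * Q.A i * U) * (Uᴴ * P * U)
        = Uᴴ * P * ((U * (Uᴴ * (Q.A i * (U * (Uᴴ * (P * U))))))) := by
          simp only [Matrix.mul_assoc]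
      _ = Uᴴ * P * (Q.A i * (P * U)) := by rw [hUcancel, hUcancel]
      _ = Uᴴ * (P * Q.A i * P) * U := by simp only [Matrix.mul_assoc]
      _ = Uᴴ * ((ε i : ℂ) • P) * U := by rw [hεdef i]
      _ = ((ε i : ℝ) : ℂ) • (Uᴴ * P * U) := by
          rw [Matrix.mul_smul, Matrix.smul_mul]
  -- diagonal entries of R
  set p : Fin n → ℝ := fun t => (R t t).re with hpdef
  have hRcoe : ∀ t, R t t = ((p t : ℝ) : ℂ) := by
    intro t
    have h : (starRingEnd ℂ) (R t t) = R t t := by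
      have := congrFun (congrFun hRherm t) t
      simpa [Matrix.conjTranspose_apply] using this
    exact (Complex.conj_eq_iff_re.mp h).symm
  have hpform : ∀ t, (p t : ℂ) = ∑ s, (Complex.normSq (R s t) : ℂ) := by
    intro t
    rw [← hRcoe t]
    have h : (R * R) t t = R t t := by rw [hRR]
    rw [← h, Matrix.mul_apply]
    apply Finset.sum_congr rfl
    intro s _
    have hst : R t s = (starRingEnd ℂ) (R s t) := by
      have := congrFun (congrFun hRherm t) s
      simp only [Matrix.conjTranspose_apply] at this
      exact this.symm
    rw [hst, mul_comm, Complex.mul_conj]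
  have hpval : ∀ t, p t = ∑ s, Complex.normSq (R s t) := by
    intro t
    have := hpform t
    exact_mod_cast this
  have hp0 : ∀ t, 0 ≤ p t := by
    intro t
    rw [hpval t]
    exact Finset.sum_nonneg fun s _ => Complex.normSq_nonneg _
  have hp1 : ∀ t, p t ≤ 1 := by
    intro t
    have h1 : Complex.normSq (R t t) ≤ p t := by
      rw [hpval t]
      exact Finset.single_le_sum (f := fun s => Complex.normSq (R s t))
        (fun s _ => Complex.normSq_nonneg _) (Finset.mem_univ t)
    rw [hRcoe t, Complex.normSq_ofReal] at h1
    nlinarith [hp0 t]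
  have hptrace : ∑ t, p t = (r : ℝ) := by
    have h : R.trace = ((∑ t, p t : ℝ) : ℂ) := by
      rw [Matrix.trace]
      push_cast
      apply Finset.sum_congr rfl
      intro t _
      exact hRcoe t
    rw [hRtr] at h
    exact_mod_cast h.symm
  -- trace identities
  have htrid : ∀ i, ∑ t, d i t * p t = ε i * r := by
    intro i
    set Dm := Matrix.diagonal (fun t => ((d i t : ℝ) : ℂ)) with hDm
    have h1 : (R * Dm * R).trace = ((ε i : ℝ) : ℂ) * R.trace := by
      rw [hRDR i, Matrix.trace_smul, smul_eq_mul]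
    have h2 : (R * Dm * R).trace = (R * Dm).trace := by
      rw [Matrix.trace_mul_cycle R Dm R, hRR]
    have h3 : (R * Dm).trace = ((∑ t, d i t * p t : ℝ) : ℂ) := by
      rw [Matrix.trace]
      push_cast
      apply Finset.sum_congr rfl
      intro t _
      rw [Matrix.diag_apply, hDm, Matrix.mul_diagonal, hRcoe t]
      push_cast
      ring
    rw [h2, h3, hRtr] at h1
    exact_mod_cast h1
  -- monotonicity of eigenvalues
  have hmono : ∀ (i : Fin m) (a b : Fin n), (a:ℕ) ≤ (b:ℕ) → Q.lam i b ≤ Q.lam i a := by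
    intro i a b hab
    obtain ⟨k, hk⟩ := Nat.exists_eq_add_of_le hab
    have hbn : (a:ℕ) + k < n := by have := b.isLt; omega
    have h := Q.lam_antitone hn i k (a:ℕ) hbn
    have hb : b = ⟨(a:ℕ)+k, hbn⟩ := Fin.ext hk
    rw [hb]
    exact h
  have htrop : ∀ (i : Fin m) (a b : Fin n), (a:ℕ) < (b:ℕ) →
      Q.lam i b < Q.lam i a / (n:ℝ)^2 := by
    intro i a b hab
    have han : (a:ℕ)+1 < n := by have := b.isLt; omega
    have h1 := Q.tropical i a han
    have h2 : Q.lam i b ≤ Q.lam i ⟨(a:ℕ)+1, han⟩ := hmono i ⟨(a:ℕ)+1, han⟩ b (by simp; omega)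
    linarith
  -- the bound ε i ≤ lam i (r-1)
  have hεle : ∀ i, ε i ≤ Q.lam i ⟨r-1, hr1n⟩ := by
    intro i
    set T : Finset (Fin n) := Finset.univ.filter (fun t => ((π i t):ℕ) ≤ r-2) with hT
    have hTcard : T.card ≤ r - 1 := by
      have hmap : ∀ t ∈ T, ((π i t):ℕ) ∈ Finset.range (r-1) := by
        intro t ht
        rw [hT, Finset.mem_filter] at ht
        rw [Finset.mem_range]
        omega
      have hinj : ∀ a ∈ T, ∀ b ∈ T, ((π i a):ℕ) = ((π i b):ℕ) → a = b := by
        intro a _ b _ hab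
        exact hπinj i (Fin.ext hab)
      calc T.card ≤ (Finset.range (r-1)).card := Finset.card_le_card_of_injOn _ hmap hinj
        _ = r - 1 := Finset.card_range _
    obtain ⟨u, hu0, hufix, huT⟩ := aux_exists_vec hRR T (by rw [hRrank]; omega)
    set Dm := Matrix.diagonal (fun t => ((d i t : ℝ) : ℂ)) with hDm
    have hstarfix : star u ᵥ* R = star u := by
      have h := Matrix.star_mulVec R u
      rw [hufix, hRherm.eq] at h
      exact h.symm
    have hq1 : star u ⬝ᵥ (R * Dm * R).mulVec u = star u ⬝ᵥ Dm.mulVec u := by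
      have e1 : (R * Dm * R).mulVec u = R.mulVec (Dm.mulVec (R.mulVec u)) := by
        rw [Matrix.mulVec_mulVec, Matrix.mulVec_mulVec]
      rw [e1, hufix, Matrix.dotProduct_mulVec, hstarfix]
    have hq2 : star u ⬝ᵥ (((ε i : ℝ) : ℂ) • R).mulVec u = ((ε i : ℝ) : ℂ) * (star u ⬝ᵥ u) := by
      rw [Matrix.smul_mulVec, hufix, dotProduct_smul, smul_eq_mul]
    have hqq : star u ⬝ᵥ Dm.mulVec u = ((ε i : ℝ) : ℂ) * (star u ⬝ᵥ u) := by
      rw [← hq1, hRDR i, hq2]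
    have hlhs : star u ⬝ᵥ Dm.mulVec u = ((∑ t, d i t * Complex.normSq (u t) : ℝ) : ℂ) := by
      rw [dotProduct]
      push_cast
      apply Finset.sum_congr rfl
      intro t _
      rw [hDm, Matrix.mulVec_diagonal]
      simp only [Pi.star_apply, RCLike.star_def]
      rw [show (starRingEnd ℂ) (u t) * (((d i t : ℝ):ℂ) * u t)
        = ((d i t : ℝ):ℂ) * ((u t) * (starRingEnd ℂ) (u t)) by ring, Complex.mul_conj]
      try push_cast
      try ring
    have hrhs : star u ⬝ᵥ u = ((∑ t, Complex.normSq (u t) : ℝ) : ℂ) := by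
      rw [dotProduct]
      push_cast
      apply Finset.sum_congr rfl
      intro t _
      simp only [Pi.star_apply, RCLike.star_def]
      rw [mul_comm, Complex.mul_conj]
      try push_cast
      try ring
    have hreal : ∑ t, d i t * Complex.normSq (u t) = ε i * ∑ t, Complex.normSq (u t) := by
      have := hqq
      rw [hlhs, hrhs] at this
      exact_mod_cast this
    set N : ℝ := ∑ t, Complex.normSq (u t) with hN
    have hNpos : 0 < N := by
      obtain ⟨t0, ht0⟩ := Function.ne_iff.mp hu0
      have h1 : 0 < Complex.normSq (u t0) := by
        simpa [Complex.normSq_pos] using ht0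
      have h2 : ∀ t ∈ Finset.univ, 0 ≤ Complex.normSq (u t) :=
        fun t _ => Complex.normSq_nonneg _
      calc (0:ℝ) < Complex.normSq (u t0) := h1
        _ ≤ N := Finset.single_le_sum h2 (Finset.mem_univ t0)
    have hub : ∑ t, d i t * Complex.normSq (u t) ≤ Q.lam i ⟨r-1, hr1n⟩ * N := by
      rw [hN, Finset.mul_sum]
      apply Finset.sum_le_sum
      intro t _
      by_cases ht : t ∈ T
      · rw [huT t ht]
        simp
      · have hge : r - 1 ≤ ((π i t):ℕ) := by
          rw [hT, Finset.mem_filter] at ht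
          push_neg at ht
          have := ht (Finset.mem_univ t)
          omega
        have := hmono i ⟨r-1, hr1n⟩ (π i t) (by simpa using hge)
        have hnn := Complex.normSq_nonneg (u t)
        rw [hddef]
        nlinarith
    rw [hreal] at hub
    have := le_of_mul_le_mul_right hub hNpos
    exact this
  -- the bad set
  set Bad : Finset (Fin n) := Finset.univ.filter (fun t => ∀ i : Fin m, r-1 ≤ ((π i t):ℕ))
    with hBadDef
  have hBadcard : Bad.card ≤ r - 1 := by
    have hsub : ∀ t ∈ Bad, ((X t):ℕ) ∈ (Finset.range m).biUnion
        (fun i => Finset.Ico (qS n m i + (r-1)) (qS n m (i+1))) := by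
      intro t ht
      obtain ⟨i, him, h1, h2⟩ := qS_gap hm (X t).isLt
      simp only [Finset.mem_biUnion, Finset.mem_range, Finset.mem_Ico]
      refine ⟨i, him, ?_, h2⟩
      have hbt := (Finset.mem_filter.mp ht).2 ⟨i, him⟩
      have hπc : ((π ⟨i, him⟩ t : ℕ)) = ((X t):ℕ) - qS n m i := by
        show (((X t):ℕ) + (n - qS n m i % n)) % n = ((X t):ℕ) - qS n m i
        conv_lhs => rw [show ((X t):ℕ) = qS n m i + (((X t):ℕ) - qS n m i) by omega]
        exact mod_helper2 hnpos _ _ (by have := (X t).isLt; omega)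
      rw [hπc] at hbt
      calc qS n m i + (r-1) ≤ qS n m i + (((X t):ℕ) - qS n m i) :=
            Nat.add_le_add_left hbt _
        _ = ((X t):ℕ) := Nat.add_sub_cancel' h1
    have hinj : ∀ a ∈ Bad, ∀ b ∈ Bad, ((X a):ℕ) = ((X b):ℕ) → a = b := by
      intro a _ b _ hab
      exact hXinj (Fin.ext hab)
    calc Bad.card ≤ ((Finset.range m).biUnion
          (fun i => Finset.Ico (qS n m i + (r-1)) (qS n m (i+1)))).card :=
        Finset.card_le_card_of_injOn _ hsub hinj
      _ ≤ ∑ i ∈ Finset.range m, (Finset.Ico (qS n m i + (r-1)) (qS n m (i+1))).card :=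
        Finset.card_biUnion_le
      _ = ∑ i ∈ Finset.range m, (qS n m (i+1) - (qS n m i + (r-1))) := by
        apply Finset.sum_congr rfl
        intro i _
        rw [Nat.card_Ico]
      _ ≤ r - 1 := qS_sum_bound hm hr2 hass'
  -- bound on covered entries
  have hpcov : ∀ t, t ∉ Bad → p t ≤ (r:ℝ) / (n:ℝ)^2 := by
    intro t ht
    rw [hBadDef, Finset.mem_filter] at ht
    push_neg at ht
    obtain ⟨i, hi⟩ := ht (Finset.mem_univ t)
    -- π i t < r - 1, i.e. π i t ≤ r - 2
    have h1 : d i t * p t ≤ ε i * r := by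
      rw [← htrid i]
      exact Finset.single_le_sum
        (f := fun s => d i s * p s)
        (fun s _ => mul_nonneg (le_of_lt (Q.pos i _)) (hp0 s)) (Finset.mem_univ t)
    have hrpos : (0:ℝ) ≤ (r:ℝ) := Nat.cast_nonneg _
    have h2 : ε i * r ≤ Q.lam i ⟨r-1, hr1n⟩ * r :=
      mul_le_mul_of_nonneg_right (hεle i) hrpos
    have h3 : Q.lam i ⟨r-1, hr1n⟩ < d i t / (n:ℝ)^2 := by
      have := htrop i (π i t) ⟨r-1, hr1n⟩ (by simpa using hi)
      rw [hddef]
      exact this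
    have hd0 : 0 < d i t := Q.pos i _
    have hn2pos : (0:ℝ) < (n:ℝ)^2 := by positivity
    have h4 : d i t * p t ≤ (d i t / (n:ℝ)^2) * r := by
      calc d i t * p t ≤ ε i * r := h1
        _ ≤ Q.lam i ⟨r-1, hr1n⟩ * r := h2
        _ ≤ (d i t / (n:ℝ)^2) * r := mul_le_mul_of_nonneg_right (le_of_lt h3) hrpos
    have h5 : d i t * p t ≤ d i t * ((r:ℝ) / (n:ℝ)^2) := by
      calc d i t * p t ≤ (d i t / (n:ℝ)^2) * r := h4
        _ = d i t * ((r:ℝ) / (n:ℝ)^2) := by ring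
    exact le_of_mul_le_mul_left h5 hd0
  -- final counting
  have hBadn : Bad.card ≤ n := by
    calc Bad.card ≤ (Finset.univ : Finset (Fin n)).card := Finset.card_le_card (Finset.filter_subset _ _)
      _ = n := by simp
  set NotBad : Finset (Fin n) :=
    Finset.univ.filter (fun t => ¬ (∀ i : Fin m, r-1 ≤ ((π i t):ℕ))) with hNotBadDef
  have hcards : Bad.card + NotBad.card = n := by
    rw [hBadDef, hNotBadDef]
    rw [Finset.card_filter_add_card_filter_not]
    simp
  have hsplit : (r:ℝ) = ∑ t ∈ Bad, p t + ∑ t ∈ NotBad, p t := by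
    rw [← hptrace, hBadDef, hNotBadDef]
    rw [Finset.sum_filter_add_sum_filter_not]
  have hb1 : ∑ t ∈ Bad, p t ≤ (Bad.card : ℝ) := by
    calc ∑ t ∈ Bad, p t ≤ ∑ t ∈ Bad, (1:ℝ) := Finset.sum_le_sum (fun t _ => hp1 t)
      _ = (Bad.card : ℝ) := by simp
  have hb2 : ∑ t ∈ NotBad, p t ≤ (NotBad.card : ℝ) * ((r:ℝ)/(n:ℝ)^2) := by
    calc ∑ t ∈ NotBad, p t ≤ ∑ t ∈ NotBad, ((r:ℝ)/(n:ℝ)^2) := by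
          apply Finset.sum_le_sum
          intro t ht
          apply hpcov
          rw [hNotBadDef, Finset.mem_filter] at ht
          rw [hBadDef, Finset.mem_filter]
          tauto
      _ = (NotBad.card : ℝ) * ((r:ℝ)/(n:ℝ)^2) := by
          rw [Finset.sum_const, nsmul_eq_mul]
  -- numeric contradiction
  have hcast1 : (Bad.card : ℝ) ≤ (r:ℝ) - 1 := by
    have : (Bad.card : ℝ) ≤ ((r-1 : ℕ) : ℝ) := by exact_mod_cast hBadcard
    have h1 : ((r-1:ℕ):ℝ) = (r:ℝ) - 1 := by
      have : (1:ℕ) ≤ r := by omega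
      push_cast [Nat.cast_sub this]
      ring
    linarith [this, h1.le]
  have hcast2 : (NotBad.card : ℝ) = (n:ℝ) - (Bad.card : ℝ) := by
    have : (NotBad.card : ℕ) = n - Bad.card := by omega
    rw [this]
    push_cast [Nat.cast_sub hBadn]
    ring
  have hrR : (2:ℝ) ≤ (r:ℝ) := by exact_mod_cast hr2
  have hnR : (r:ℝ) ≤ (n:ℝ) := by exact_mod_cast hrn
  have hn2R : (2:ℝ) ≤ (n:ℝ) := by exact_mod_cast hn2
  have hkey : ((n:ℝ) - (r:ℝ) + 1) * (r:ℝ) < (n:ℝ)^2 := by nlinarith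
  have hfrac : (0:ℝ) ≤ (r:ℝ)/(n:ℝ)^2 := by positivity
  have hfrac1 : (r:ℝ)/(n:ℝ)^2 ≤ 1 := by
    rw [div_le_one (by positivity)]
    nlinarith
  have hchain : (r:ℝ) ≤ (Bad.card : ℝ) + ((n:ℝ) - (Bad.card:ℝ)) * ((r:ℝ)/(n:ℝ)^2) := by
    have h2 := hb2
    rw [hcast2] at h2
    linarith [hb1, h2, hsplit.le, hsplit.ge]
  have hmono2 : (Bad.card : ℝ) + ((n:ℝ) - (Bad.card:ℝ)) * ((r:ℝ)/(n:ℝ)^2)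
      ≤ ((r:ℝ) - 1) + ((n:ℝ) - ((r:ℝ)-1)) * ((r:ℝ)/(n:ℝ)^2) := by
    set c := (r:ℝ)/(n:ℝ)^2
    set b := (Bad.card : ℝ)
    have h1 : b + ((n:ℝ) - b) * c = (n:ℝ)*c + b*(1-c) := by ring
    have h2 : ((r:ℝ)-1) + ((n:ℝ) - ((r:ℝ)-1))*c = (n:ℝ)*c + ((r:ℝ)-1)*(1-c) := by ring
    rw [h1, h2]
    have h3 : (0:ℝ) ≤ 1 - c := by linarith [hfrac1]
    nlinarith [hcast1]
  have hlast : ((n:ℝ) - ((r:ℝ)-1)) * ((r:ℝ)/(n:ℝ)^2) < 1 := by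
    rw [show ((n:ℝ) - ((r:ℝ)-1)) * ((r:ℝ)/(n:ℝ)^2)
      = (((n:ℝ) - (r:ℝ) + 1) * (r:ℝ))/(n:ℝ)^2 by ring]
    rw [div_lt_one (by positivity)]
    exact hkey
  linarith [hchain, hmono2, hlast]
end

section
/- Every coloring of the quantum graph Q_{n,m} has cardinality at least slog(n, m+1). -/
open Matrix

namespace SlogAux

lemma slog_zero (q : ℕ) : slog q 0 = 0 := by rw [slog]

lemma slog_succ (q p : ℕ) : slog q (p+1) = slog q (p + 1 - max 1 ((p + 1 + q - 1) / q)) + 1 := by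
  rw [slog]

def step (q p : ℕ) : ℕ := p - max 1 ((p + q - 1) / q)

lemma slog_pos_eq (q p : ℕ) (hp : 1 ≤ p) : slog q p = slog q (step q p) + 1 := by
  obtain ⟨p', rfl⟩ := Nat.exists_eq_add_of_le hp
  rw [add_comm 1 p', slog_succ]
  rfl

lemma step_lt (q p : ℕ) (hp : 1 ≤ p) : step q p < p :=
  Nat.sub_lt hp (lt_of_lt_of_le Nat.zero_lt_one (le_max_left _ _))

lemma step_mono (q : ℕ) : Monotone (step q) := by
  apply monotone_nat_of_le_succ
  intro p
  have h1 : (p + q - 1) / q ≤ (p + 1 + q - 1) / q := by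
    apply Nat.div_le_div_right; omega
  have h2 : (p + 1 + q - 1) / q ≤ (p + q - 1) / q + 1 := by
    rcases Nat.eq_zero_or_pos q with hq | hq
    · subst hq; simp
    · have : p + 1 + q - 1 ≤ (p + q - 1) + q := by omega
      calc (p + 1 + q - 1) / q ≤ ((p + q - 1) + q) / q := Nat.div_le_div_right this
        _ = (p + q - 1) / q + 1 := Nat.add_div_right _ hq
  unfold step
  omega

lemma slog_mono (q : ℕ) : Monotone (slog q) := by
  intro p p' h
  induction p' using Nat.strong_induction_on generalizing p with
  | _ p' ih =>
    rcases Nat.eq_zero_or_pos p with hp | hp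
    · subst hp; simp [slog_zero]
    · have hp' : 1 ≤ p' := le_trans hp h
      rw [slog_pos_eq q p hp, slog_pos_eq q p' hp']
      have := step_mono q h
      exact Nat.succ_le_succ (ih (step q p') (step_lt q p' hp') this)

/-- The key step lemma for the greedy argument. -/
lemma slog_add_le (q D d : ℕ) (hq : 1 ≤ q) (hd : 1 ≤ d)
    (hle : d ≤ (D + d + q - 1) / q) : slog q (D + d) ≤ slog q D + 1 := by
  rw [slog_pos_eq q (D + d) (by omega)]
  have hstep : step q (D + d) ≤ D := by
    unfold step
    have : d ≤ max 1 ((D + d + q - 1) / q) := le_trans hle (le_max_right _ _)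
    omega
  exact Nat.succ_le_succ (slog_mono q hstep)

/-- arithmetic: `d ≤ D/m + 1` gives the hypothesis of `slog_add_le` with `q = m+1`. -/
lemma div_arith (m D d : ℕ) (hm : 1 ≤ m) (hd : d ≤ D / m + 1) :
    d ≤ (D + d + (m + 1) - 1) / (m + 1) := by
  rw [Nat.le_div_iff_mul_le (by omega)]
  have h1 : (D / m) * m ≤ D := Nat.div_mul_le_self D m
  have h2 : d * m ≤ (D / m + 1) * m := Nat.mul_le_mul_right m hd
  have h3 : (D / m + 1) * m = (D / m) * m + m := by ring
  have h4 : d * (m + 1) = d * m + d := by ring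
  omega

end SlogAux


open Matrix

namespace MatAux

variable {n : ℕ}

lemma mul_vecMulVec (M : Matrix (Fin n) (Fin n) ℂ) (x y : Fin n → ℂ) :
    M * vecMulVec x y = vecMulVec (M *ᵥ x) y := by
  ext u v
  simp only [mul_apply, vecMulVec_apply, mulVec, dotProduct, Finset.sum_mul]
  exact Finset.sum_congr rfl fun k _ => by ring

lemma vecMulVec_mulVec' (a b x : Fin n → ℂ) :
    vecMulVec a b *ᵥ x = (b ⬝ᵥ x) • a := by
  funext u
  simp only [mulVec, vecMulVec_apply, dotProduct, Pi.smul_apply, smul_eq_mul,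
    Finset.sum_mul, Finset.mul_sum]
  exact Finset.sum_congr rfl fun k _ => by ring

lemma smul_vecMulVec (c : ℂ) (x y : Fin n → ℂ) :
    vecMulVec (c • x) y = c • vecMulVec x y := by
  ext u v
  simp [vecMulVec_apply, mul_assoc]

lemma resolution (v : Fin n → Fin n → ℂ)
    (ho : ∀ j k, star (v j) ⬝ᵥ v k = if j = k then 1 else 0) :
    ∑ j, vecMulVec (v j) (star (v j)) = 1 := by
  have hU : (Matrix.of fun j u => star (v j u)) * (Matrix.of fun u j => v j u) = 1 := by
    ext j k
    simpa [Matrix.mul_apply, Matrix.one_apply, dotProduct] using ho j k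
  have h2 := mul_eq_one_comm.mp hU
  ext u u'
  have h3 : ((Matrix.of fun u j => v j u) * Matrix.of fun j u => star (v j u)) u u'
      = (1 : Matrix (Fin n) (Fin n) ℂ) u u' := by rw [h2]
  simp only [Matrix.mul_apply, Matrix.of_apply] at h3
  rw [Matrix.sum_apply]
  simp only [vecMulVec_apply, Pi.star_apply]
  exact h3

lemma eig_decomp (A : Matrix (Fin n) (Fin n) ℂ) (v : Fin n → Fin n → ℂ) (lam : Fin n → ℝ)
    (ho : ∀ j k, star (v j) ⬝ᵥ v k = if j = k then 1 else 0)
    (heig : ∀ j, A *ᵥ v j = (lam j : ℂ) • v j) :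
    A = ∑ j, (lam j : ℂ) • vecMulVec (v j) (star (v j)) := by
  calc A = A * 1 := (mul_one A).symm
    _ = A * ∑ j, vecMulVec (v j) (star (v j)) := by rw [resolution v ho]
    _ = ∑ j, A * vecMulVec (v j) (star (v j)) := Finset.mul_sum _ _ _
    _ = ∑ j, (lam j : ℂ) • vecMulVec (v j) (star (v j)) := by
        refine Finset.sum_congr rfl fun j _ => ?_
        rw [mul_vecMulVec, heig, smul_vecMulVec]

lemma trace_vecMulVec_mul (x y : Fin n → ℂ) (M : Matrix (Fin n) (Fin n) ℂ) :
    ((vecMulVec x y) * M).trace = y ⬝ᵥ (M *ᵥ x) := by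
  simp only [Matrix.trace, Matrix.diag, mul_apply, vecMulVec_apply, dotProduct, mulVec]
  rw [Finset.sum_comm]
  refine Finset.sum_congr rfl fun k _ => ?_
  rw [Finset.mul_sum]
  exact Finset.sum_congr rfl fun u _ => by ring

lemma trace_eig_mul (A M : Matrix (Fin n) (Fin n) ℂ) (v : Fin n → Fin n → ℂ) (lam : Fin n → ℝ)
    (ho : ∀ j k, star (v j) ⬝ᵥ v k = if j = k then 1 else 0)
    (heig : ∀ j, A *ᵥ v j = (lam j : ℂ) • v j) :
    (A * M).trace = ∑ j, (lam j : ℂ) * (star (v j) ⬝ᵥ (M *ᵥ v j)) := by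
  conv_lhs => rw [eig_decomp A v lam ho heig]
  rw [Finset.sum_mul, Matrix.trace_sum]
  refine Finset.sum_congr rfl fun j _ => ?_
  rw [smul_mul_assoc, Matrix.trace_smul, trace_vecMulVec_mul]
  simp [smul_eq_mul]

/-- sum over a basis of diagonal "masses" is the trace -/
lemma sum_dot_eq_trace (M : Matrix (Fin n) (Fin n) ℂ) (v : Fin n → Fin n → ℂ)
    (ho : ∀ j k, star (v j) ⬝ᵥ v k = if j = k then 1 else 0) :
    ∑ j, star (v j) ⬝ᵥ (M *ᵥ v j) = M.trace := by
  have h1 : ∀ j, star (v j) ⬝ᵥ (M *ᵥ v j) = ((vecMulVec (v j) (star (v j))) * M).trace :=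
    fun j => (trace_vecMulVec_mul _ _ _).symm
  simp_rw [h1]
  rw [← Matrix.trace_sum, ← Finset.sum_mul, resolution v ho, one_mul]

lemma star_dot_self_eq (y : Fin n → ℂ) :
    star y ⬝ᵥ y = ((∑ u, Complex.normSq (y u) : ℝ) : ℂ) := by
  push_cast
  simp only [dotProduct, Pi.star_apply]
  exact Finset.sum_congr rfl fun u _ => by
    rw [Complex.star_def, ← Complex.normSq_eq_conj_mul_self]

lemma herm_dot_real (P : Matrix (Fin n) (Fin n) ℂ) (hP : P.IsHermitian) (x : Fin n → ℂ) :
    star x ⬝ᵥ (P *ᵥ x) = ((star x ⬝ᵥ (P *ᵥ x)).re : ℂ) := by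
  have h : star (star x ⬝ᵥ (P *ᵥ x)) = star x ⬝ᵥ (P *ᵥ x) := by
    rw [← Matrix.star_dotProduct, Matrix.star_mulVec, ← Matrix.dotProduct_mulVec, hP.eq]
  have him : (star x ⬝ᵥ (P *ᵥ x)).im = 0 := by
    have := congrArg Complex.im h
    simp only [Complex.star_def, Complex.conj_im] at this
    linarith
  nth_rewrite 1 [← Complex.re_add_im (star x ⬝ᵥ (P *ᵥ x))]
  rw [him]
  simp

lemma proj_dot_nonneg (P : Matrix (Fin n) (Fin n) ℂ) (hP : P.IsHermitian) (hidem : P * P = P)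
    (x : Fin n → ℂ) : 0 ≤ (star x ⬝ᵥ (P *ᵥ x)).re := by
  have hPP : Pᴴ * P = P := by rw [hP.eq]; exact hidem
  have : star x ⬝ᵥ (P *ᵥ x) = star (P *ᵥ x) ⬝ᵥ (P *ᵥ x) := by
    conv_lhs => rw [← hPP]
    rw [← Matrix.mulVec_mulVec, Matrix.dotProduct_mulVec, ← Matrix.star_mulVec]
  rw [this, star_dot_self_eq]
  rw [Complex.ofReal_re]
  exact Finset.sum_nonneg fun u _ => Complex.normSq_nonneg _

lemma star_dot_self_pos (y : Fin n → ℂ) (hy : y ≠ 0) : 0 < (star y ⬝ᵥ y).re := by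
  rw [star_dot_self_eq, Complex.ofReal_re]
  have h1 : ∀ u ∈ Finset.univ, (0:ℝ) ≤ Complex.normSq (y u) := fun u _ => Complex.normSq_nonneg _
  have h2 : ∃ u ∈ Finset.univ, (0:ℝ) < Complex.normSq (y u) := by
    have : ∃ u, y u ≠ 0 := by
      by_contra hcon
      push_neg at hcon
      exact hy (funext hcon)
    obtain ⟨u, hu⟩ := this
    exact ⟨u, Finset.mem_univ u, Complex.normSq_pos.mpr hu⟩
  obtain ⟨u, _, hu⟩ := h2
  calc (0:ℝ) < Complex.normSq (y u) := hu
    _ ≤ ∑ u, Complex.normSq (y u) := Finset.single_le_sum h1 (Finset.mem_univ u)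

/-- quadratic form expansion in an orthonormal eigenbasis -/
lemma quad_eig (A : Matrix (Fin n) (Fin n) ℂ) (v : Fin n → Fin n → ℂ) (lam : Fin n → ℝ)
    (ho : ∀ j k, star (v j) ⬝ᵥ v k = if j = k then 1 else 0)
    (heig : ∀ j, A *ᵥ v j = (lam j : ℂ) • v j) (x : Fin n → ℂ) :
    star x ⬝ᵥ (A *ᵥ x) =
      ((∑ j, lam j * Complex.normSq (star (v j) ⬝ᵥ x) : ℝ) : ℂ) := by
  have h1 : star x ⬝ᵥ (A *ᵥ x) = ((vecMulVec x (star x)) * A).trace :=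
    (trace_vecMulVec_mul x (star x) A).symm
  rw [h1, Matrix.trace_mul_comm, trace_eig_mul A _ v lam ho heig]
  push_cast
  refine Finset.sum_congr rfl fun j _ => ?_
  rw [vecMulVec_mulVec', dotProduct_smul, smul_eq_mul]
  have hsx : star x ⬝ᵥ v j = star (star (v j) ⬝ᵥ x) := by
    rw [Matrix.star_dotProduct]
  have hns : (star (v j) ⬝ᵥ x) * star (star (v j) ⬝ᵥ x) = (Complex.normSq (star (v j) ⬝ᵥ x) : ℂ) := by
    rw [Complex.star_def, Complex.mul_conj]
  rw [hsx, mul_comm (star (star (v j) ⬝ᵥ x)), hns]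

/-- quadratic norm expansion -/
lemma quad_one (v : Fin n → Fin n → ℂ)
    (ho : ∀ j k, star (v j) ⬝ᵥ v k = if j = k then 1 else 0) (x : Fin n → ℂ) :
    star x ⬝ᵥ x = ((∑ j, Complex.normSq (star (v j) ⬝ᵥ x) : ℝ) : ℂ) := by
  have h := quad_eig (1 : Matrix (Fin n) (Fin n) ℂ) v (fun _ => (1:ℝ)) ho
    (fun j => by simp) x
  rw [Matrix.one_mulVec] at h
  simpa using h

end MatAux


open Matrix

namespace MatAux
variable {n : ℕ}

lemma proj_spectral (P : Matrix (Fin n) (Fin n) ℂ) (hP : P.IsHermitian) (hidem : P * P = P) :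
    ∃ (T : Finset (Fin n)) (u : Fin n → Fin n → ℂ),
      P.trace = (T.card : ℂ) ∧ (∀ k ∈ T, P *ᵥ u k = u k) ∧
      (∀ k l, star (u k) ⬝ᵥ u l = if k = l then 1 else 0) := by
  classical
  set U : Matrix (Fin n) (Fin n) ℂ := (hP.eigenvectorUnitary : Matrix (Fin n) (Fin n) ℂ) with hU
  have hU2 : U * star U = 1 := (Matrix.mem_unitaryGroup_iff).mp (hP.eigenvectorUnitary).2
  have hU1 : star U * U = 1 := (Matrix.mem_unitaryGroup_iff').mp (hP.eigenvectorUnitary).2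
  set ev : Fin n → ℝ := hP.eigenvalues with hev
  set D : Matrix (Fin n) (Fin n) ℂ := Matrix.diagonal (fun k => ((ev k : ℝ) : ℂ)) with hD
  have hspec : P = U * D * star U := by
    have := hP.spectral_theorem
    rw [Unitary.conjStarAlgAut_apply] at this
    exact this
  have hPD : star U * P * U = D := by
    rw [hspec]
    calc star U * (U * D * star U) * U = (star U * U) * D * (star U * U) := by
          simp only [mul_assoc]
      _ = D := by rw [hU1, one_mul, mul_one]
  have hDD : D * D = D := by
    calc D * D = (star U * P * U) * (star U * P * U) := by rw [hPD]
      _ = star U * (P * (U * star U) * P) * U := by simp only [mul_assoc]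
      _ = star U * (P * P) * U := by rw [hU2, mul_one]
      _ = D := by rw [hidem, hPD]
  have hev01 : ∀ k, ev k = 0 ∨ ev k = 1 := by
    intro k
    have h1 : ((ev k : ℝ) : ℂ) * ((ev k : ℝ) : ℂ) = ((ev k : ℝ) : ℂ) := by
      have := congrFun (congrFun (congrArg (fun M => M) hDD) k) k
      simpa [hD, Matrix.diagonal_mul_diagonal, Matrix.diagonal_apply_eq] using this
    have h2 : ((ev k : ℝ) : ℂ) * (((ev k : ℝ) : ℂ) - 1) = 0 := by
      rw [mul_sub, mul_one, h1, sub_self]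
    rcases mul_eq_zero.mp h2 with h | h
    · left; exact_mod_cast h
    · right; have : ((ev k : ℝ) : ℂ) = 1 := by linear_combination h
      exact_mod_cast this
  refine ⟨Finset.univ.filter (fun k => ev k = 1), fun k => U *ᵥ Pi.single k 1, ?_, ?_, ?_⟩
  · have htr : P.trace = D.trace := by
      rw [hspec, Matrix.trace_mul_cycle, hU1, one_mul]
    rw [htr, hD, Matrix.trace_diagonal]
    rw [Finset.card_filter]
    push_cast
    refine Finset.sum_congr rfl fun k _ => ?_
    rcases hev01 k with h | h <;> simp [h]
  · intro k hk
    have hk1 : ev k = 1 := (Finset.mem_filter.mp hk).2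
    rw [Matrix.mulVec_mulVec, hspec]
    calc (U * D * star U * U) *ᵥ Pi.single k 1 = (U * D) *ᵥ Pi.single k 1 := by
          rw [mul_assoc (U*D), hU1, mul_one]
      _ = U *ᵥ (D *ᵥ Pi.single k 1) := by rw [Matrix.mulVec_mulVec]
      _ = U *ᵥ Pi.single k 1 := by
          rw [hD, Matrix.diagonal_mulVec_single, hk1]
          norm_num
  · intro k l
    rw [Matrix.star_mulVec, Matrix.dotProduct_mulVec, Matrix.vecMul_vecMul,
      ← Matrix.star_eq_conjTranspose, hU1, Matrix.vecMul_one]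
    have hs : star (Pi.single k (1:ℂ)) = (Pi.single k (1:ℂ) : Fin n → ℂ) := by
      funext a
      by_cases h : a = k <;> simp [Pi.single_apply, h]
    rw [hs]
    simp [dotProduct, Pi.single_apply]
    by_cases h : k = l <;> simp [h]
    exact fun hlk => h hlk.symm

end MatAux

open Matrix
namespace MatAux
variable {n : ℕ}

/-- the linear functional `x ↦ star y ⬝ᵥ x` -/
noncomputable def dotfun (y : Fin n → ℂ) : (Fin n → ℂ) →ₗ[ℂ] ℂ where
  toFun := fun x => star y ⬝ᵥ x
  map_add' := fun a b => dotProduct_add _ a b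
  map_smul' := fun c a => by simp [dotProduct_smul]

lemma dotProduct_sum'' {ι : Type*} (y : Fin n → ℂ) (s : Finset ι) (f : ι → Fin n → ℂ) :
    y ⬝ᵥ (∑ k ∈ s, f k) = ∑ k ∈ s, y ⬝ᵥ f k := by
  simp only [dotProduct, Finset.sum_apply, Finset.mul_sum]
  rw [Finset.sum_comm]

lemma interlacing (A P : Matrix (Fin n) (Fin n) ℂ) (v : Fin n → Fin n → ℂ) (lam : Fin n → ℝ)
    (ho : ∀ j k, star (v j) ⬝ᵥ v k = if j = k then 1 else 0)
    (heig : ∀ j, A *ᵥ v j = (lam j : ℂ) • v j)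
    (hanti : ∀ j k : Fin n, j ≤ k → lam k ≤ lam j)
    (hP : P.IsHermitian) (hidem : P * P = P) (ε : ℝ)
    (hcode : P * A * P = (ε:ℂ) • P)
    (d : ℕ) (htr : P.trace = (d:ℂ)) (r : ℕ) (hrn : r < n) (hd : r + 1 ≤ d) :
    ε ≤ lam ⟨r, hrn⟩ := by
  classical
  obtain ⟨T, u, hTtr, hTfix, hTortho⟩ := proj_spectral P hP hidem
  have hTcard : T.card = d := by
    have : ((T.card : ℕ) : ℂ) = ((d : ℕ) : ℂ) := by rw [← hTtr, htr]
    exact_mod_cast this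
  -- the fixed subspace
  set F : Submodule ℂ (Fin n → ℂ) := LinearMap.ker (P.mulVecLin - LinearMap.id) with hF
  have hmemF : ∀ z, z ∈ F ↔ P *ᵥ z = z := by
    intro z
    rw [hF, LinearMap.mem_ker, LinearMap.sub_apply, LinearMap.id_apply, sub_eq_zero,
      Matrix.mulVecLin_apply]
  -- span of the unit eigenvectors
  set V : Submodule ℂ (Fin n → ℂ) := Submodule.span ℂ (Set.range (fun k : {k // k ∈ T} => u k.1))
    with hV
  have hVF : V ≤ F := by
    rw [hV, Submodule.span_le]
    rintro z ⟨k, rfl⟩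
    rw [SetLike.mem_coe, hmemF]
    exact hTfix k.1 k.2
  have hli : LinearIndependent ℂ (fun k : {k // k ∈ T} => u k.1) := by
    rw [Fintype.linearIndependent_iff]
    intro g hg k0
    have h1 : star (u k0.1) ⬝ᵥ (∑ k : {k // k ∈ T}, g k • u k.1) = 0 := by rw [hg, dotProduct_zero]
    rw [dotProduct_sum''] at h1
    simp_rw [dotProduct_smul, hTortho] at h1
    rw [Finset.sum_eq_single k0] at h1
    · simpa using h1
    · intro b _ hb
      have hne : ¬ (k0.1 = b.1) := fun h => hb (Subtype.ext h.symm)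
      simp [hne]
    · intro h; exact absurd (Finset.mem_univ k0) h
  have hdimV : d ≤ Module.finrank ℂ V := by
    have := finrank_span_eq_card hli
    rw [hV, this, Fintype.card_coe, hTcard]
  -- the coordinate map
  set φ : V →ₗ[ℂ] (Fin r → ℂ) :=
    (LinearMap.pi (fun t : Fin r => dotfun (v (Fin.castLE (le_of_lt hrn) t)))).comp V.subtype
    with hφ
  have hnotinj : ¬ Function.Injective φ := by
    intro hinj
    have h1 : Module.finrank ℂ V ≤ Module.finrank ℂ (Fin r → ℂ) :=
      LinearMap.finrank_le_finrank_of_injective hinj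
    rw [Module.finrank_fin_fun] at h1
    omega
  rw [← LinearMap.ker_eq_bot] at hnotinj
  obtain ⟨x0, hx0ker, hx0ne⟩ := Submodule.exists_mem_ne_zero_of_ne_bot hnotinj
  set x : Fin n → ℂ := (x0 : Fin n → ℂ) with hx
  have hxne : x ≠ 0 := fun h => hx0ne (by exact_mod_cast Subtype.ext h)
  have hPx : P *ᵥ x = x := (hmemF x).mp (hVF x0.2)
  have hzero : ∀ t : Fin n, (t : ℕ) < r → star (v t) ⬝ᵥ x = 0 := by
    intro t ht
    have := congrFun (congrArg (fun z => (z : Fin r → ℂ)) ((LinearMap.mem_ker).mp hx0ker)) ⟨t, ht⟩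
    simpa [hφ, dotfun, Fin.castLE] using this
  -- quadratic identity
  have hmain : ((∑ j, lam j * Complex.normSq (star (v j) ⬝ᵥ x) : ℝ) : ℂ)
      = ((ε * ∑ j, Complex.normSq (star (v j) ⬝ᵥ x) : ℝ) : ℂ) := by
    have hL : star x ⬝ᵥ ((P * A * P) *ᵥ x) = star x ⬝ᵥ (A *ᵥ x) := by
      have h2 : (P * A * P) *ᵥ x = P *ᵥ (A *ᵥ x) := by
        rw [← Matrix.mulVec_mulVec, ← Matrix.mulVec_mulVec, hPx]
      rw [h2, Matrix.dotProduct_mulVec]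
      have h3 : star x ᵥ* P = star x := by
        have h4 : star x ᵥ* P = star (Pᴴ *ᵥ x) := by
          rw [Matrix.star_mulVec, Matrix.conjTranspose_conjTranspose]
        rw [h4, hP.eq, hPx]
      rw [h3]
    have hR : star x ⬝ᵥ (((ε:ℂ) • P) *ᵥ x) = (ε:ℂ) * (star x ⬝ᵥ x) := by
      rw [Matrix.smul_mulVec, hPx, dotProduct_smul, smul_eq_mul]
    have h5 : star x ⬝ᵥ ((P * A * P) *ᵥ x) = star x ⬝ᵥ (((ε:ℂ) • P) *ᵥ x) := by rw [hcode]
    rw [hL, hR] at h5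
    rw [← quad_eig A v lam ho heig x, h5, quad_one v ho x]
    push_cast
    ring
  have hreal : (∑ j, lam j * Complex.normSq (star (v j) ⬝ᵥ x))
      = ε * ∑ j, Complex.normSq (star (v j) ⬝ᵥ x) := by exact_mod_cast hmain
  set N : ℝ := ∑ j, Complex.normSq (star (v j) ⬝ᵥ x) with hN
  have hNpos : 0 < N := by
    have := star_dot_self_pos x hxne
    have h6 : star x ⬝ᵥ x = ((N : ℝ) : ℂ) := quad_one v ho x
    rw [h6] at this
    simpa using this
  have hbound : (∑ j, lam j * Complex.normSq (star (v j) ⬝ᵥ x)) ≤ lam ⟨r, hrn⟩ * N := by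
    rw [hN, Finset.mul_sum]
    refine Finset.sum_le_sum fun j _ => ?_
    by_cases hj : (j : ℕ) < r
    · rw [hzero j hj]
      simp
    · push_neg at hj
      have : lam j ≤ lam ⟨r, hrn⟩ := hanti ⟨r, hrn⟩ j hj
      exact mul_le_mul_of_nonneg_right this (Complex.normSq_nonneg _)
  rw [hreal] at hbound
  exact le_of_mul_le_mul_right hbound hNpos

end MatAux


namespace CombAux

def dstep (g b : ℕ) (i : ℕ) : ℕ := g + (if i + 1 ≤ b then 1 else 0)

def Doff (g b : ℕ) : ℕ → ℕ
  | 0 => 0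
  | i+1 => Doff g b i + dstep g b i

lemma Doff_closed (g b i : ℕ) : Doff g b i = i * g + min i b := by
  induction i with
  | zero => simp [Doff]
  | succ i ih =>
    rw [Doff, ih, dstep, Nat.succ_mul]
    rcases le_or_gt (i+1) b with h | h
    · rw [if_pos h, min_eq_left (by omega), min_eq_left (by omega)]
      ring
    · rw [if_neg (by omega), min_eq_right (by omega), min_eq_right (by omega)]
      ring

lemma Doff_top (n m : ℕ) (hm : 1 ≤ m) : Doff (n/m) (n%m) m = n := by
  rw [Doff_closed]
  have h1 : n % m < m := Nat.mod_lt _ hm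
  have h2 : m * (n/m) + n % m = n := Nat.div_add_mod n m
  rw [min_eq_right (le_of_lt h1)]
  exact h2

lemma Doff_mono (g b : ℕ) : Monotone (Doff g b) := by
  apply monotone_nat_of_le_succ
  intro i
  rw [Doff]
  omega

lemma Doff_lt (n m i : ℕ) (hm : 1 ≤ m) (hi : i < m) (j : ℕ) (hj : j < dstep (n/m) (n%m) i) :
    Doff (n/m) (n%m) i + j < n := by
  have h1 : Doff (n/m) (n%m) i + j < Doff (n/m) (n%m) (i+1) := by rw [Doff]; omega
  have h2 : Doff (n/m) (n%m) (i+1) ≤ Doff (n/m) (n%m) m := Doff_mono _ _ (by omega)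
  rw [Doff_top n m hm] at h2
  omega

lemma sum_partition (g b : ℕ) (f : ℕ → ℝ) (I : ℕ) :
    ∑ i ∈ Finset.range I, ∑ j ∈ Finset.range (dstep g b i), f (Doff g b i + j)
      = ∑ u ∈ Finset.range (Doff g b I), f u := by
  induction I with
  | zero => simp [Doff]
  | succ I ih =>
    rw [Finset.sum_range_succ, ih, Doff]
    rw [← Finset.sum_range_add_sum_Ico f (Nat.le_add_right (Doff g b I) (dstep g b I))]
    congr 1
    rw [Finset.sum_Ico_eq_sum_range]
    simp

/-- Case m ≥ n of the key claim: some single top has small mass. -/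
lemma exists_low_mass (n D : ℕ) (hn : 1 ≤ n) (hD : D < n) (Mu : ℕ → ℝ)
    (hsum : ∑ u ∈ Finset.range n, Mu u = D) :
    ∃ u < n, (n:ℝ) * Mu u ≤ D := by
  by_contra hcon
  push_neg at hcon
  have h1 : ∑ u ∈ Finset.range n, (D:ℝ) < ∑ u ∈ Finset.range n, (n:ℝ) * Mu u := by
    apply Finset.sum_lt_sum_of_nonempty
    · exact ⟨0, Finset.mem_range.mpr (by omega)⟩
    · intro u hu
      exact hcon u (Finset.mem_range.mp hu)
  rw [Finset.sum_const, ← Finset.mul_sum, hsum, Finset.card_range, nsmul_eq_mul] at h1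
  exact lt_irrefl _ h1

/-- The key combinatorial claim: some arc has large deficiency. -/
lemma key_claim (n m D : ℕ) (hn : 2 ≤ n) (hm : 1 ≤ m) (hD : D < n)
    (Mu : ℕ → ℝ) (hM0 : ∀ u, 0 ≤ Mu u) (hM1 : ∀ u, Mu u ≤ 1)
    (hsum : ∑ u ∈ Finset.range n, Mu u = D) :
    ∃ i, i < m ∧ ((n:ℝ) - D) ≤ (n:ℝ)^2 *
      (((D/m + 1 : ℕ) : ℝ)
        - ∑ j ∈ Finset.range (D/m + 1), Mu ((Doff (n/m) (n%m) i + j) % n)) := by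
  rcases le_or_gt n m with hcase | hcase
  -- case m ≥ n
  · obtain ⟨u, hun, hu⟩ := exists_low_mass n D (by omega) hD Mu hsum
    refine ⟨u, by omega, ?_⟩
    have hr : D / m = 0 := Nat.div_eq_of_lt (by omega)
    have hDoff : Doff (n/m) (n%m) u = u := by
      rw [Doff_closed]
      rcases eq_or_lt_of_le hcase with h | h
      · have h1 : n / m = 1 := by rw [← h, Nat.div_self (by omega)]
        have h2 : n % m = 0 := by rw [← h, Nat.mod_self]
        rw [h1, h2]
        omega
      · have h1 : n / m = 0 := Nat.div_eq_of_lt h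
        have h2 : n % m = n := Nat.mod_eq_of_lt h
        rw [h1, h2]
        omega
    rw [hr, hDoff]
    rw [Finset.sum_range_one, Nat.mod_eq_of_lt (by omega : u + 0 < n)]
    simp only [Nat.add_zero]
    have hDn : (D:ℝ) ≤ (n:ℝ) - 1 := by
      have : (D:ℝ) + 1 ≤ n := by exact_mod_cast hD
      linarith
    have hn2 : (2:ℝ) ≤ n := by exact_mod_cast hn
    push_cast
    nlinarith [hM0 u, hM1 u, hu, hDn, hn2,
      mul_le_mul_of_nonneg_left hu (by positivity : (0:ℝ) ≤ (n:ℝ)),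
      mul_nonneg (by linarith : (0:ℝ) ≤ (n:ℝ) - 1) (by linarith : (0:ℝ) ≤ (n:ℝ) - (D:ℝ))]
  -- case m < n
  · set R : ℕ := D / m + 1 with hR
    set X : ℕ := ∑ i ∈ Finset.range m, (R - dstep (n/m) (n%m) i) with hX
    have hmodlt : n % m < m := Nat.mod_lt _ hm
    -- total arc mass bound
    have harc : ∑ i ∈ Finset.range m, (∑ j ∈ Finset.range R, Mu ((Doff (n/m) (n%m) i + j) % n))
        ≤ (D:ℝ) + (X:ℝ) := by
      have hstep : ∀ i ∈ Finset.range m,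
          (∑ j ∈ Finset.range R, Mu ((Doff (n/m) (n%m) i + j) % n))
            ≤ (∑ j ∈ Finset.range (dstep (n/m) (n%m) i), Mu (Doff (n/m) (n%m) i + j))
              + ((R - dstep (n/m) (n%m) i : ℕ) : ℝ) := by
        intro i hi
        have him : i < m := Finset.mem_range.mp hi
        have hsplit : Finset.range R
            = Finset.range (min R (dstep (n/m) (n%m) i))
              ∪ Finset.Ico (min R (dstep (n/m) (n%m) i)) R := by
          rw [Finset.range_eq_Ico,
            ← Finset.Ico_union_Ico_eq_Ico (Nat.zero_le _) (min_le_left R (dstep (n/m) (n%m) i)), ← Finset.range_eq_Ico]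
        rw [hsplit, Finset.sum_union (by
          apply Finset.disjoint_left.mpr
          intro x hx1 hx2
          simp only [Finset.mem_range, Finset.mem_Ico] at hx1 hx2
          omega)]
        have h1 : ∑ j ∈ Finset.range (min R (dstep (n/m) (n%m) i)), Mu ((Doff (n/m) (n%m) i + j) % n)
            ≤ ∑ j ∈ Finset.range (dstep (n/m) (n%m) i), Mu (Doff (n/m) (n%m) i + j) := by
          have heq : ∀ j ∈ Finset.range (min R (dstep (n/m) (n%m) i)),
              Mu ((Doff (n/m) (n%m) i + j) % n) = Mu (Doff (n/m) (n%m) i + j) := by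
            intro j hj
            have hjr := Finset.mem_range.mp hj
            rw [Nat.mod_eq_of_lt (Doff_lt n m i hm him j (by omega))]
          rw [Finset.sum_congr rfl heq]
          apply Finset.sum_le_sum_of_subset_of_nonneg
          · exact Finset.range_subset_range.mpr (min_le_right _ _)
          · intro j _ _
            exact hM0 _
        have h2 : ∑ j ∈ Finset.Ico (min R (dstep (n/m) (n%m) i)) R, Mu ((Doff (n/m) (n%m) i + j) % n)
            ≤ ((R - dstep (n/m) (n%m) i : ℕ) : ℝ) := by
          calc ∑ j ∈ Finset.Ico (min R (dstep (n/m) (n%m) i)) R, Mu ((Doff (n/m) (n%m) i + j) % n)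
              ≤ ∑ _j ∈ Finset.Ico (min R (dstep (n/m) (n%m) i)) R, (1:ℝ) :=
                Finset.sum_le_sum fun j _ => hM1 _
            _ = ((R - min R (dstep (n/m) (n%m) i) : ℕ) : ℝ) := by
                rw [Finset.sum_const, Nat.card_Ico]; simp
            _ = ((R - dstep (n/m) (n%m) i : ℕ) : ℝ) := by congr 1; omega
        linarith
      calc ∑ i ∈ Finset.range m, (∑ j ∈ Finset.range R, Mu ((Doff (n/m) (n%m) i + j) % n))
          ≤ ∑ i ∈ Finset.range m, ((∑ j ∈ Finset.range (dstep (n/m) (n%m) i), Mu (Doff (n/m) (n%m) i + j))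
              + ((R - dstep (n/m) (n%m) i : ℕ) : ℝ)) := Finset.sum_le_sum hstep
        _ = (D:ℝ) + (X:ℝ) := by
            rw [Finset.sum_add_distrib]
            congr 1
            · rw [sum_partition (n/m) (n%m) Mu m, Doff_top n m hm, hsum]
            · rw [hX]
              push_cast
              rfl
    -- pick the minimal arc
    have hmin : ∃ i < m, (m:ℝ) * (∑ j ∈ Finset.range R, Mu ((Doff (n/m) (n%m) i + j) % n))
        ≤ (D:ℝ) + (X:ℝ) := by
      by_contra hcon
      push_neg at hcon
      have h1 : ∑ i ∈ Finset.range m, ((D:ℝ) + (X:ℝ))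
          < ∑ i ∈ Finset.range m, (m:ℝ) * (∑ j ∈ Finset.range R, Mu ((Doff (n/m) (n%m) i + j) % n)) := by
        apply Finset.sum_lt_sum_of_nonempty
        · exact ⟨0, Finset.mem_range.mpr (by omega)⟩
        · intro i hi
          exact hcon i (Finset.mem_range.mp hi)
      rw [Finset.sum_const, Finset.card_range, ← Finset.mul_sum, nsmul_eq_mul] at h1
      have h2 : (m:ℝ) * (∑ i ∈ Finset.range m, ∑ j ∈ Finset.range R, Mu ((Doff (n/m) (n%m) i + j) % n))
          ≤ (m:ℝ) * ((D:ℝ) + (X:ℝ)) := by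
        apply mul_le_mul_of_nonneg_left harc (by positivity)
      linarith
    -- the main inequality
    have hfinal : (n:ℝ)^2 * ((D:ℝ) + (X:ℝ)) + (m:ℝ) * ((n:ℝ) - D)
        ≤ (n:ℝ)^2 * (m:ℝ) * (R:ℝ) := by
      have hDdm : m * (D/m) + D % m = D := Nat.div_add_mod D m
      have hDmod : D % m < m := Nat.mod_lt _ hm
      have hNdm : m * (n/m) + n % m = n := Nat.div_add_mod n m
      have hcast : ((m:ℝ)) ≤ (n:ℝ) - 1 := by
        have : (m:ℝ) + 1 ≤ n := by exact_mod_cast hcase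
        linarith
      have hDcast : (D:ℝ) ≤ (n:ℝ) - 1 := by
        have : (D:ℝ) + 1 ≤ n := by exact_mod_cast hD
        linarith
      have hn2 : (2:ℝ) ≤ n := by exact_mod_cast hn
      rcases lt_or_ge (D/m) (n/m) with hA | hB
      · -- X = 0 and m*R ≥ D+1
        have hX0 : X = 0 := by
          rw [hX]
          apply Finset.sum_eq_zero
          intro i _
          have : R ≤ dstep (n/m) (n%m) i := by
            rw [hR, dstep]
            omega
          omega
        have hmR : D + 1 ≤ m * R := by
          have h3 : m * R = m * (D/m) + m := by rw [hR]; ring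
          omega
        have hmRcast : (D:ℝ) + 1 ≤ (m:ℝ) * (R:ℝ) := by exact_mod_cast hmR
        rw [hX0]
        simp only [Nat.cast_zero, add_zero]
        have hint1 : (n:ℝ)^2 * ((D:ℝ) + 1) ≤ (n:ℝ)^2 * ((m:ℝ) * (R:ℝ)) :=
          mul_le_mul_of_nonneg_left hmRcast (by positivity)
        have hint2 : (0:ℝ) ≤ ((n:ℝ) - 1 - (m:ℝ)) * (n:ℝ) :=
          mul_nonneg (by linarith) (by positivity)
        have hint3 : (0:ℝ) ≤ (m:ℝ) * (D:ℝ) :=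
          mul_nonneg (by positivity) (by positivity)
        nlinarith [hint1, hint2, hint3, hn2]
      · -- D/m = n/m, X = m - n%m
        have hBB : D / m = n / m := le_antisymm (Nat.div_le_div_right (le_of_lt hD)) hB
        have hXval : X = m - n % m := by
          rw [hX]
          have hterm : ∀ i, R - dstep (n/m) (n%m) i = if i + 1 ≤ n % m then 0 else 1 := by
            intro i
            rw [hR, hBB, dstep]
            split <;> omega
          rw [Finset.sum_congr rfl (fun i _ => hterm i)]
          rw [Finset.sum_ite, Finset.sum_const, Finset.sum_const]
          have hfil : (Finset.range m).filter (fun i => ¬ (i + 1 ≤ n % m)) = Finset.Ico (n%m) m := by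
            ext x
            simp only [Finset.mem_filter, Finset.mem_range, Finset.mem_Ico]
            omega
          rw [hfil, Nat.card_Ico]
          simp
        have hmRR : m * R = m * (n/m) + m := by rw [hR, hBB]; ring
        have hcast1 : ((m * (n/m) : ℕ) : ℝ) + ((n % m : ℕ) : ℝ) = (n:ℝ) := by exact_mod_cast hNdm
        have hcast2 : ((m:ℝ)) * (R:ℝ) = ((m * (n/m) : ℕ) : ℝ) + (m:ℝ) := by exact_mod_cast hmRR
        have hcast3 : (X:ℝ) = (m:ℝ) - ((n % m : ℕ) : ℝ) := by
          rw [hXval]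
          have : (n % m) ≤ m := le_of_lt hmodlt
          push_cast [this]
          ring
        have hnm : (0:ℝ) ≤ (n:ℝ)^2 - m := by nlinarith [hn2, hcast]
        have hprod : (0:ℝ) ≤ ((n:ℝ) - D) * ((n:ℝ)^2 - (m:ℝ)) :=
          mul_nonneg (by linarith) hnm
        nlinarith [hcast1, hcast2, hcast3, hprod]
    obtain ⟨i, him, harcmin⟩ := hmin
    refine ⟨i, him, ?_⟩
    have hm0 : (0:ℝ) < m := by exact_mod_cast hm
    have h6 : (n:ℝ)^2 * ((m:ℝ) * (∑ j ∈ Finset.range R, Mu ((Doff (n/m) (n%m) i + j) % n)))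
        ≤ (n:ℝ)^2 * ((D:ℝ) + (X:ℝ)) :=
      mul_le_mul_of_nonneg_left harcmin (by positivity)
    have e2 : (m:ℝ) * ((n:ℝ) - D) ≤ (n:ℝ)^2 * (m:ℝ) * (R:ℝ)
        - (n:ℝ)^2 * ((m:ℝ) * (∑ j ∈ Finset.range R, Mu ((Doff (n/m) (n%m) i + j) % n))) := by
      linarith [h6, hfinal]
    have e3 : (m:ℝ) * ((n:ℝ)^2 * ((R:ℝ)
          - ∑ j ∈ Finset.range R, Mu ((Doff (n/m) (n%m) i + j) % n)))
        = (n:ℝ)^2 * (m:ℝ) * (R:ℝ)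
          - (n:ℝ)^2 * ((m:ℝ) * (∑ j ∈ Finset.range R, Mu ((Doff (n/m) (n%m) i + j) % n))) := by
      ring
    have e4 : (m:ℝ) * ((n:ℝ) - D) ≤ (m:ℝ) * ((n:ℝ)^2 * ((R:ℝ)
        - ∑ j ∈ Finset.range R, Mu ((Doff (n/m) (n%m) i + j) % n))) := by
      rw [e3]; exact e2
    exact le_of_mul_le_mul_left e4 hm0

end CombAux

namespace MatAux
variable {n : ℕ}
lemma sum_mulVec'' {ι : Type*} (s : Finset ι) (f : ι → Matrix (Fin n) (Fin n) ℂ)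
    (x : Fin n → ℂ) : (∑ c ∈ s, f c) *ᵥ x = ∑ c ∈ s, (f c *ᵥ x) := by
  classical
  induction s using Finset.induction_on with
  | empty => simp [Matrix.zero_mulVec]
  | insert _ _ ha ih =>
    rw [Finset.sum_insert ha, Finset.sum_insert ha, Matrix.add_mulVec, ih]
end MatAux
namespace QnmAux
open Matrix MatAux CombAux

variable {n m : ℕ}

lemma lam_le (Q : Qnm n m) (i : Fin m) :
    ∀ (t : ℕ) (a b : Fin n), (b : ℕ) = (a : ℕ) + t → Q.lam i b ≤ Q.lam i a := by
  intro t
  induction t with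
  | zero =>
    intro a b h
    have : b = a := Fin.ext (by omega)
    rw [this]
  | succ t ih =>
    intro a b h
    have hbn := b.isLt
    have hb' : (a : ℕ) + t < n := by omega
    have hn1 : 1 ≤ n := by omega
    have hn2 : (1:ℝ) ≤ (n:ℝ)^2 := by
      have : (1:ℝ) ≤ (n:ℝ) := by exact_mod_cast hn1
      nlinarith
    have htrop := Q.tropical i ⟨(a : ℕ) + t, hb'⟩ (by simpa using (by omega : (a:ℕ) + t + 1 < n))
    have hbe : b = ⟨(a:ℕ) + t + 1, by omega⟩ := Fin.ext (by simp; omega)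
    have h1 : Q.lam i b ≤ Q.lam i ⟨(a:ℕ)+t, hb'⟩ := by
      rw [hbe]
      calc Q.lam i ⟨(a:ℕ)+t+1, by omega⟩ ≤ Q.lam i ⟨(a:ℕ)+t, hb'⟩ / (n:ℝ)^2 := le_of_lt htrop
        _ ≤ Q.lam i ⟨(a:ℕ)+t, hb'⟩ := div_le_self (le_of_lt (Q.pos i _)) hn2
    exact le_trans h1 (ih a ⟨(a:ℕ)+t, hb'⟩ rfl)

lemma lam_anti (Q : Qnm n m) (i : Fin m) (a b : Fin n) (hab : a ≤ b) :
    Q.lam i b ≤ Q.lam i a :=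
  lam_le Q i ((b:ℕ) - (a:ℕ)) a b (by omega)

lemma w_shift (Q : Qnm n m) (hm : 0 < m) :
    ∀ (iv : ℕ) (hi : iv < m) (j : Fin n),
      Q.w ⟨iv, hi⟩ j
        = Q.w ⟨0, hm⟩ ⟨((j : ℕ) + CombAux.Doff (n/m) (n%m) iv) % n,
            Nat.mod_lt _ (lt_of_le_of_lt (Nat.zero_le _) j.isLt)⟩ := by
  intro iv
  induction iv with
  | zero =>
    intro hi j
    have hval : ((j:ℕ) + CombAux.Doff (n/m) (n%m) 0) % n = (j:ℕ) := by
      rw [CombAux.Doff]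
      simp [Nat.mod_eq_of_lt j.isLt]
    exact congrArg (Q.w ⟨0, hm⟩) (Fin.ext hval.symm)
  | succ iv ih =>
    intro hi j
    have hlt : iv < m := by omega
    have hcyc := Q.cyclical ⟨iv, hlt⟩ (by simpa using hi) j
    rw [hcyc, ih hlt]
    refine congrArg (Q.w ⟨0, hm⟩) (Fin.ext ?_)
    show ((((j : ℕ) + n / m + (if iv + 1 ≤ n % m then 1 else 0)) % n)
        + CombAux.Doff (n/m) (n%m) iv) % n
      = ((j : ℕ) + CombAux.Doff (n/m) (n%m) (iv+1)) % n
    rw [Nat.mod_add_mod, CombAux.Doff, CombAux.dstep]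
    by_cases hcnd : iv + 1 ≤ n % m
    · simp only [if_pos hcnd]
      congr 1
      omega
    · simp only [if_neg hcnd]
      congr 1
      omega

end QnmAux
/-- Every coloring of `Q_{n,m}` (a finite set of codes whose projections sum to the
identity) has cardinality at least `slog(n, m+1)`. -/
theorem coloring_card_ge_slog {n m : ℕ} (hn : 1 ≤ n) (hm : 1 ≤ m) (Q : Qnm n m)
    (K : Finset (Matrix (Fin n) (Fin n) ℂ))
    (hK : ∀ P ∈ K, Q.IsCode P) (hsum : ∑ P ∈ K, P = 1) :
    slog (m + 1) n ≤ K.card := by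
  classical
  have hherm : ∀ P ∈ K, P.IsHermitian := fun P hP => (hK P hP).1
  have hidem : ∀ P ∈ K, P * P = P := fun P hP => (hK P hP).2.1
  have hepsex : ∀ P, P ∈ K → ∀ i, ∃ ε : ℝ, P * Q.A i * P = (ε : ℂ) • P :=
    fun P hP => (hK P hP).2.2
  choose! eps heps using hepsex
  have hdex : ∀ P, P ∈ K → ∃ dd : ℕ, P.trace = (dd : ℂ) := by
    intro P hP
    obtain ⟨T, u, h1, _, _⟩ := MatAux.proj_spectral P (hherm P hP) (hidem P hP)
    exact ⟨T.card, h1⟩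
  choose! d hd using hdex
  have htotC : ∑ c ∈ K, (d c : ℂ) = (n : ℂ) := by
    have h1 : ∑ c ∈ K, Matrix.trace c = Matrix.trace (1 : Matrix (Fin n) (Fin n) ℂ) := by
      rw [← Matrix.trace_sum, hsum]
    rw [Matrix.trace_one] at h1
    calc ∑ c ∈ K, (d c : ℂ) = ∑ c ∈ K, Matrix.trace c :=
          Finset.sum_congr rfl (fun c hc => (hd c hc).symm)
      _ = (n:ℂ) := by rw [h1]; simp
  have htot : ∑ c ∈ K, d c = n := by exact_mod_cast htotC
  rcases Nat.lt_or_ge n 2 with hn1 | hn2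
  · -- n = 1
    have hne : n = 1 := by omega
    have hK1 : 1 ≤ K.card := by
      by_contra hc
      have hKe : K = ∅ := Finset.card_eq_zero.mp (by omega)
      rw [hKe, Finset.sum_empty] at hsum
      have h0 := congrFun (congrFun hsum ⟨0, by omega⟩) ⟨0, by omega⟩
      rw [Matrix.one_apply_eq] at h0
      exact one_ne_zero h0.symm
    subst hne
    have hs1 : slog (m + 1) 1 = 1 := by
      rw [SlogAux.slog_pos_eq (m+1) 1 (le_refl 1)]
      have : SlogAux.step (m+1) 1 = 0 := by
        unfold SlogAux.step
        have h2 : (1 + (m+1) - 1) / (m+1) = 1 := by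
          rw [show 1 + (m+1) - 1 = m+1 by omega, Nat.div_self (by omega)]
        omega
      rw [this, SlogAux.slog_zero]
    rw [hs1]
    exact hK1
  · -- main case n ≥ 2
    set rho : (Fin n → ℂ) → Matrix (Fin n) (Fin n) ℂ → ℝ :=
      fun x P => (star x ⬝ᵥ (P *ᵥ x)).re with hrho
    have hrho_nonneg : ∀ x, ∀ c ∈ K, 0 ≤ rho x c := fun x c hc =>
      MatAux.proj_dot_nonneg c (hherm c hc) (hidem c hc) x
    have hrho_total : ∀ i : Fin m, ∀ j : Fin n, ∑ c ∈ K, rho (Q.w i j) c = 1 := by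
      intro i j
      have h2 : (∑ c ∈ K, c) *ᵥ Q.w i j = ∑ c ∈ K, (c *ᵥ Q.w i j) :=
        MatAux.sum_mulVec'' K _ _
      have h1 : ∑ c ∈ K, (star (Q.w i j) ⬝ᵥ (c *ᵥ Q.w i j)) = 1 := by
        calc ∑ c ∈ K, star (Q.w i j) ⬝ᵥ (c *ᵥ Q.w i j)
            = star (Q.w i j) ⬝ᵥ (∑ c ∈ K, (c *ᵥ Q.w i j)) :=
              (MatAux.dotProduct_sum'' _ _ _).symm
          _ = star (Q.w i j) ⬝ᵥ ((∑ c ∈ K, c) *ᵥ Q.w i j) := by rw [h2]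
          _ = star (Q.w i j) ⬝ᵥ ((1 : Matrix (Fin n) (Fin n) ℂ) *ᵥ Q.w i j) := by rw [hsum]
          _ = 1 := by rw [Matrix.one_mulVec]; simpa using Q.ortho i j j
      have h3 := congrArg Complex.re h1
      rw [Complex.re_sum] at h3
      simpa [hrho] using h3
    have hbasis_sum : ∀ i : Fin m, ∀ c ∈ K, ∑ j : Fin n, rho (Q.w i j) c = (d c : ℝ) := by
      intro i c hc
      have h1 := MatAux.sum_dot_eq_trace c (Q.w i) (Q.ortho i)
      rw [hd c hc] at h1
      have h3 := congrArg Complex.re h1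
      rw [Complex.re_sum] at h3
      simpa [hrho] using h3
    have heps_sum : ∀ i : Fin m, ∀ c ∈ K, ∑ j : Fin n, Q.lam i j * rho (Q.w i j) c
        = eps c i * (d c : ℝ) := by
      intro i c hc
      have htr : (Q.A i * c).trace = (((eps c i * (d c : ℕ) : ℝ)) : ℂ) := by
        have h1 : (c * Q.A i * c).trace = (((eps c i : ℝ) : ℂ) • c).trace := by
          rw [heps c hc i]
        rw [Matrix.trace_smul, hd c hc] at h1
        have h2 : (c * Q.A i * c).trace = (Q.A i * c).trace := by
          rw [Matrix.trace_mul_cycle, hidem c hc, Matrix.trace_mul_comm]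
        rw [h2] at h1
        rw [h1, smul_eq_mul]
        push_cast
        ring
      have h3 := MatAux.trace_eig_mul (Q.A i) c (Q.w i) (Q.lam i) (Q.ortho i) (Q.eig i)
      rw [htr] at h3
      have h4 := congrArg Complex.re h3
      rw [Complex.re_sum, Complex.ofReal_re] at h4
      have h5 : ∀ j : Fin n, (((Q.lam i j : ℝ) : ℂ) * (star (Q.w i j) ⬝ᵥ (c *ᵥ Q.w i j))).re
          = Q.lam i j * rho (Q.w i j) c := fun j => Complex.re_ofReal_mul _ _
      rw [Finset.sum_congr rfl (fun j _ => h5 j)] at h4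
      exact h4.symm
    have hstep : ∀ S : Finset (Matrix (Fin n) (Fin n) ℂ), S ⊆ K → (∑ c ∈ S, d c) < n →
        ∃ c ∈ K, c ∉ S ∧ 1 ≤ d c ∧ d c ≤ (∑ c ∈ S, d c) / m + 1 := by
      intro S hSK hDlt
      set D : ℕ := ∑ c ∈ S, d c with hDdef
      set Mu : ℕ → ℝ :=
        fun u => if h : u < n then ∑ c ∈ S, rho (Q.w ⟨0, hm⟩ ⟨u, h⟩) c else 0 with hMu
      have hmass_nonneg : ∀ i : Fin m, ∀ j : Fin n, 0 ≤ ∑ c ∈ S, rho (Q.w i j) c :=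
        fun i j => Finset.sum_nonneg fun c hc => hrho_nonneg _ c (hSK hc)
      have hmass_le_one : ∀ i : Fin m, ∀ j : Fin n, ∑ c ∈ S, rho (Q.w i j) c ≤ 1 := by
        intro i j
        rw [← hrho_total i j]
        exact Finset.sum_le_sum_of_subset_of_nonneg hSK
          (fun c hc _ => hrho_nonneg _ c hc)
      have hM0 : ∀ u, 0 ≤ Mu u := by
        intro u
        rw [hMu]
        dsimp only
        split
        · exact hmass_nonneg _ _
        · exact le_refl 0
      have hM1 : ∀ u, Mu u ≤ 1 := by
        intro u
        rw [hMu]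
        dsimp only
        split
        · exact hmass_le_one _ _
        · exact zero_le_one
      have hMusum : ∑ u ∈ Finset.range n, Mu u = (D : ℝ) := by
        rw [← Fin.sum_univ_eq_sum_range Mu n]
        have h1 : ∀ j : Fin n, Mu (j : ℕ) = ∑ c ∈ S, rho (Q.w ⟨0, hm⟩ j) c := by
          intro j
          rw [hMu]
          dsimp only
          rw [dif_pos j.isLt]
        rw [Finset.sum_congr rfl (fun j _ => h1 j), Finset.sum_comm]
        rw [hDdef]
        push_cast
        exact Finset.sum_congr rfl (fun c hc => hbasis_sum ⟨0, hm⟩ c (hSK hc))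
      obtain ⟨iv, him, hdef⟩ := CombAux.key_claim n m D hn2 hm hDlt Mu hM0 hM1 hMusum
      obtain ⟨a, ha⟩ : ∃ a, a = D / m := ⟨_, rfl⟩
      obtain ⟨R, hRdef⟩ : ∃ R, R = a + 1 := ⟨_, rfl⟩
      have hdiva : a ≤ D := by rw [ha]; exact Nat.div_le_self D m
      rw [← ha, ← hRdef] at hdef
      set iF : Fin m := ⟨iv, him⟩ with hiF
      have hR1 : 1 ≤ R := by omega
      have hRn : R ≤ n := by omega
      have hnpos : 0 < n := by omega
      have harceq : ∀ (jv : ℕ), jv < R → ∀ (h2 : jv < n),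
          Mu ((CombAux.Doff (n/m) (n%m) iv + jv) % n)
            = ∑ c ∈ S, rho (Q.w iF ⟨jv, h2⟩) c := by
        intro jv hjv h2
        have harg : (CombAux.Doff (n/m) (n%m) iv + jv) % n < n := Nat.mod_lt _ hnpos
        have hws : Q.w iF ⟨jv, h2⟩
            = Q.w ⟨0, hm⟩ ⟨((jv : ℕ) + CombAux.Doff (n/m) (n%m) iv) % n,
                Nat.mod_lt _ (lt_of_le_of_lt (Nat.zero_le _) h2)⟩ :=
          QnmAux.w_shift Q hm iv him ⟨jv, h2⟩
        rw [hMu]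
        dsimp only
        rw [dif_pos harg]
        refine Finset.sum_congr rfl (fun c _ => ?_)
        congr 1
        rw [hws]
        exact congrArg (Q.w ⟨0, hm⟩) (Fin.ext (by simp [Nat.add_comm]))
      -- identity: remaining weight
      have hremain : ∑ c ∈ K \ S, (d c : ℝ) * eps c iF
          = ∑ j : Fin n, Q.lam iF j * (1 - ∑ c ∈ S, rho (Q.w iF j) c) := by
        have h1 : ∀ c ∈ K \ S, (d c : ℝ) * eps c iF
            = ∑ j : Fin n, Q.lam iF j * rho (Q.w iF j) c := by
          intro c hc
          rw [mul_comm]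
          exact (heps_sum iF c (Finset.mem_sdiff.mp hc).1).symm
        rw [Finset.sum_congr rfl h1, Finset.sum_comm]
        refine Finset.sum_congr rfl fun j _ => ?_
        rw [← Finset.mul_sum]
        congr 1
        have h2 : ∑ c ∈ K \ S, rho (Q.w iF j) c + ∑ c ∈ S, rho (Q.w iF j) c = 1 := by
          rw [Finset.sum_sdiff hSK, hrho_total]
        linarith
      have hR1n : R - 1 < n := by omega
      set L : ℝ := Q.lam iF ⟨R - 1, hR1n⟩ with hL
      have hLpos : 0 < L := Q.pos iF _
      -- lower bound on the remaining weight
      have hc3 : L * ((R : ℝ) - ∑ jv ∈ Finset.range R, Mu ((CombAux.Doff (n/m) (n%m) iv + jv) % n))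
          ≤ ∑ c ∈ K \ S, (d c : ℝ) * eps c iF := by
        set G : ℕ → ℝ := fun jv =>
          if h : jv < n then Q.lam iF ⟨jv, h⟩ * (1 - ∑ c ∈ S, rho (Q.w iF ⟨jv, h⟩) c) else 0
          with hG
        have hG0 : ∀ jv, 0 ≤ G jv := by
          intro jv
          rw [hG]
          dsimp only
          split
          · have := hmass_le_one iF ⟨jv, by assumption⟩
            have hp := Q.pos iF (⟨jv, by assumption⟩ : Fin n)
            nlinarith
          · exact le_refl 0
        have hGFin : ∑ j : Fin n, Q.lam iF j * (1 - ∑ c ∈ S, rho (Q.w iF j) c)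
            = ∑ jv ∈ Finset.range n, G jv := by
          rw [← Fin.sum_univ_eq_sum_range G n]
          refine Finset.sum_congr rfl fun j _ => ?_
          rw [hG]
          dsimp only
          rw [dif_pos j.isLt]
        have htrunc : ∑ jv ∈ Finset.range R, G jv ≤ ∑ jv ∈ Finset.range n, G jv :=
          Finset.sum_le_sum_of_subset_of_nonneg (Finset.range_subset_range.mpr hRn)
            (fun jv _ _ => hG0 jv)
        have hlowG : ∀ jv ∈ Finset.range R,
            L * (1 - Mu ((CombAux.Doff (n/m) (n%m) iv + jv) % n)) ≤ G jv := by
          intro jv hjv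
          have hjvR := Finset.mem_range.mp hjv
          have hjvn : jv < n := lt_of_lt_of_le hjvR hRn
          rw [harceq jv hjvR hjvn, hG]
          dsimp only
          rw [dif_pos hjvn]
          have hlam : L ≤ Q.lam iF ⟨jv, hjvn⟩ := by
            rw [hL]
            exact QnmAux.lam_anti Q iF ⟨jv, hjvn⟩ ⟨R - 1, hR1n⟩ (by simp; omega)
          have hmass := hmass_le_one iF ⟨jv, hjvn⟩
          nlinarith
        calc L * ((R : ℝ) - ∑ jv ∈ Finset.range R, Mu ((CombAux.Doff (n/m) (n%m) iv + jv) % n))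
            = ∑ jv ∈ Finset.range R,
                L * (1 - Mu ((CombAux.Doff (n/m) (n%m) iv + jv) % n)) := by
              rw [← Finset.mul_sum]
              congr 1
              rw [Finset.sum_sub_distrib, Finset.sum_const, Finset.card_range,
                nsmul_eq_mul, mul_one]
          _ ≤ ∑ jv ∈ Finset.range R, G jv := Finset.sum_le_sum hlowG
          _ ≤ ∑ jv ∈ Finset.range n, G jv := htrunc
          _ = ∑ c ∈ K \ S, (d c : ℝ) * eps c iF := by rw [hremain, hGFin]
      -- combine with the deficiency bound
      have hc5 : L * ((n : ℝ) - D)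
          ≤ (n : ℝ)^2 * ∑ c ∈ K \ S, (d c : ℝ) * eps c iF := by
        have e1 : L * ((n : ℝ) - D) ≤ L * ((n:ℝ)^2
            * ((R : ℝ) - ∑ jv ∈ Finset.range R, Mu ((CombAux.Doff (n/m) (n%m) iv + jv) % n))) :=
          mul_le_mul_of_nonneg_left hdef (le_of_lt hLpos)
        have e2 : L * ((n:ℝ)^2
            * ((R : ℝ) - ∑ jv ∈ Finset.range R, Mu ((CombAux.Doff (n/m) (n%m) iv + jv) % n)))
            = (n:ℝ)^2 * (L * ((R : ℝ)
              - ∑ jv ∈ Finset.range R, Mu ((CombAux.Doff (n/m) (n%m) iv + jv) % n))) := by ring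
        have e3 := mul_le_mul_of_nonneg_left hc3 (by positivity : (0:ℝ) ≤ (n:ℝ)^2)
        calc L * ((n : ℝ) - D) ≤ _ := e1
          _ = _ := e2
          _ ≤ _ := e3
      -- pick the heaviest remaining color
      have htot2 : ∑ c ∈ K \ S, d c + D = n := by
        rw [hDdef, Finset.sum_sdiff hSK, htot]
      have hne : ((K \ S).filter (fun c => 1 ≤ d c)).Nonempty := by
        by_contra hcon
        rw [Finset.not_nonempty_iff_eq_empty] at hcon
        have hzero : ∑ c ∈ K \ S, d c = 0 := by
          apply Finset.sum_eq_zero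
          intro c hc
          by_contra hd0
          have hmem : c ∈ (K \ S).filter (fun c => 1 ≤ d c) :=
            Finset.mem_filter.mpr ⟨hc, by omega⟩
          rw [hcon] at hmem
          exact absurd hmem (Finset.notMem_empty c)
        omega
      obtain ⟨cmax, hcmem, hcmax⟩ := Finset.exists_max_image _ (fun c => eps c iF) hne
      have hcmemKS : cmax ∈ K \ S := (Finset.mem_filter.mp hcmem).1
      have hcd1 : 1 ≤ d cmax := (Finset.mem_filter.mp hcmem).2
      have hcK : cmax ∈ K := (Finset.mem_sdiff.mp hcmemKS).1
      have hcnS : cmax ∉ S := (Finset.mem_sdiff.mp hcmemKS).2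
      have hub : ∑ c ∈ K \ S, (d c : ℝ) * eps c iF ≤ ((n : ℝ) - D) * eps cmax iF := by
        have h1 : ∀ c ∈ K \ S, (d c : ℝ) * eps c iF ≤ (d c : ℝ) * eps cmax iF := by
          intro c hc
          rcases Nat.eq_zero_or_pos (d c) with h0 | h0
          · rw [h0]; simp
          · have hcf : c ∈ (K \ S).filter (fun c => 1 ≤ d c) :=
              Finset.mem_filter.mpr ⟨hc, h0⟩
            exact mul_le_mul_of_nonneg_left (hcmax c hcf) (by positivity)
        calc ∑ c ∈ K \ S, (d c : ℝ) * eps c iF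
            ≤ ∑ c ∈ K \ S, (d c : ℝ) * eps cmax iF := Finset.sum_le_sum h1
          _ = (∑ c ∈ K \ S, (d c : ℝ)) * eps cmax iF := by rw [Finset.sum_mul]
          _ = ((n : ℝ) - D) * eps cmax iF := by
              congr 1
              have : ((∑ c ∈ K \ S, d c : ℕ) : ℝ) + (D : ℝ) = (n : ℝ) := by
                exact_mod_cast htot2
              push_cast at this ⊢
              linarith
      rcases le_or_gt (d cmax) R with hok | hbig
      · refine ⟨cmax, hcK, hcnS, hcd1, ?_⟩
        rw [← ha]
        omega
      · exfalso
        have hdn : d cmax ≤ n := by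
          calc d cmax ≤ ∑ c ∈ K, d c :=
                Finset.single_le_sum (fun c _ => Nat.zero_le _) hcK
            _ = n := htot
        have hRltn : R < n := by omega
        have hinterlace := MatAux.interlacing (Q.A iF) cmax (Q.w iF) (Q.lam iF) (Q.ortho iF)
          (Q.eig iF) (fun a b hab => QnmAux.lam_anti Q iF a b hab) (hherm cmax hcK)
          (hidem cmax hcK) (eps cmax iF) (heps cmax hcK iF) (d cmax) (hd cmax hcK)
          R hRltn (by omega)
        have htropR := Q.tropical iF ⟨R - 1, hR1n⟩ (by simpa using (by omega : R - 1 + 1 < n))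
        have heqf : (⟨((⟨R - 1, hR1n⟩ : Fin n) : ℕ) + 1,
            by simpa using (by omega : R - 1 + 1 < n)⟩ : Fin n) = ⟨R, hRltn⟩ :=
          Fin.ext (show R - 1 + 1 = R by omega)
        rw [heqf] at htropR
        -- htropR : Q.lam iF ⟨R, hRltn⟩ < L / n^2
        have hNDpos : (0 : ℝ) < (n : ℝ) - D := by
          have : (D : ℝ) + 1 ≤ n := by exact_mod_cast hDlt
          linarith
        have hn2pos : (0 : ℝ) < (n : ℝ)^2 := by positivity
        have e1 : eps cmax iF < L / (n:ℝ)^2 := lt_of_le_of_lt hinterlace htropR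
        have e2 : (n:ℝ)^2 * (((n:ℝ) - D) * eps cmax iF)
            < (n:ℝ)^2 * (((n:ℝ) - D) * (L / (n:ℝ)^2)) := by
          apply mul_lt_mul_of_pos_left _ hn2pos
          exact mul_lt_mul_of_pos_left e1 hNDpos
        have e3 : (n:ℝ)^2 * (((n:ℝ) - D) * (L / (n:ℝ)^2)) = ((n:ℝ) - D) * L := by
          field_simp
        have e4 : (n:ℝ)^2 * (∑ c ∈ K \ S, (d c : ℝ) * eps c iF)
            ≤ (n:ℝ)^2 * (((n:ℝ) - D) * eps cmax iF) :=
          mul_le_mul_of_nonneg_left hub (le_of_lt hn2pos)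
        linarith [hc5, e4, e2, e3]
    have hmain : ∀ (t : ℕ) (S : Finset (Matrix (Fin n) (Fin n) ℂ)), S ⊆ K → (K \ S).card ≤ t →
        slog (m+1) (∑ c ∈ S, d c) ≤ S.card → slog (m+1) n ≤ K.card := by
      intro t
      induction t with
      | zero =>
        intro S hSK hcard hslog
        have hempty : K \ S = ∅ := Finset.card_eq_zero.mp (le_antisymm hcard (Nat.zero_le _))
        have hKS : S = K := Finset.Subset.antisymm hSK (Finset.sdiff_eq_empty_iff_subset.mp hempty)
        rw [hKS, htot] at hslog
        exact hslog
      | succ t ih =>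
        intro S hSK hcard hslog
        have hle : (∑ c ∈ S, d c) ≤ n := by
          calc (∑ c ∈ S, d c) ≤ ∑ c ∈ K, d c := Finset.sum_le_sum_of_subset hSK
            _ = n := htot
        rcases eq_or_lt_of_le hle with heq | hlt
        · rw [heq] at hslog
          exact le_trans hslog (Finset.card_le_card hSK)
        · obtain ⟨c, hcK, hcS, hc1, hcle⟩ := hstep S hSK hlt
          refine ih (insert c S) (Finset.insert_subset hcK hSK) ?_ ?_
          · have h1 : K \ insert c S = (K \ S).erase c := Finset.sdiff_insert K S c
            have hcmem : c ∈ K \ S := Finset.mem_sdiff.mpr ⟨hcK, hcS⟩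
            rw [h1]
            have h2 := Finset.card_erase_of_mem hcmem
            have h3 : 1 ≤ (K \ S).card := Finset.card_pos.mpr ⟨c, hcmem⟩
            omega
          · rw [Finset.sum_insert hcS, Finset.card_insert_of_notMem hcS, add_comm (d c)]
            have hstep2 : slog (m+1) ((∑ c ∈ S, d c) + d c) ≤ slog (m+1) (∑ c ∈ S, d c) + 1 := by
              apply SlogAux.slog_add_le _ _ _ (by omega) hc1
              exact SlogAux.div_arith m _ _ hm hcle
            exact le_trans hstep2 (by omega)
    exact hmain K.card ∅ (Finset.empty_subset K) (by simp) (by simp [SlogAux.slog_zero])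
end
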